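/- Let C̄ be an F_q-conic of PG(2,q^3). Then in the (usual, not exact-at-infinity) Bruck–Bose representation in PG(6,q), the corresponding set [C] is a k-dimensional normal rational curve, where k ∈ {2, 3, 4, 6}. -/

import Mathlib

/-!
Common set-up: an explicit model of the Bruck-Bose representation of PG(2,q^3) in PG(6,q),
of the Bose representation of PG(2,q^3) in PG(8,q), and of their cubic and sextic
field extensions.

`Fq`, `F3`, `F6` are the fields of orders `q`, `q^3`, `q^6`.

* PG(2,q^3) is `Projectivization F3 (Fin 3 → F3)`, with line at infinity `z = 0`.
* The ambient 7-dimensional `Fq`-space of PG(6,q) is `V6 = (Fin 2 → F3) × Fq`.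
  Its extensions to `F3` and `F6` are modelled blockwise using the Galois splitting
  `F3 ⊗ F3 ≅ F3 × F3 × F3`:  `V63 = (Fin 3 → Fin 2 → F3) × F3` and
  `V66 = (Fin 3 → Fin 2 → F6) × F6`, with the Frobenius collineation acting by a cyclic
  shift of the blocks composed with coordinatewise q-th powers (`tauBB`).
* The hyperplane at infinity is `{v | v.2 = 0}`; the regular 2-spread consists of
  the planes `{(l•(x,y),0) | l ∈ F3}`, whose extensions meet the transversal lines:
  the transversal line `g^{q^e}` is the set of vectors `gBlockVec e a b`.
* Similarly PG(8,q) has ambient `Fq`-space `Fin 3 → F3` with extensions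
  `Fin 3 → Fin 3 → K` (`K = F3, F6`), the Bose spread plane of a point `(x:y:z)` being
  `{l•(x,y,z)}`; the transversal plane `Γ^{q^e}` is the block `e` (`GammaPlane e`),
  and a point `X̄ = (x:y:z)` of PG(2,q^3) corresponds to the point of `Γ` with vector
  `blockVec 0 ![x,y,z]`.
-/

noncomputable section
open scoped Classical

/-- The projective point `P` is represented, up to a nonzero scalar, by the vector `w`. -/
def pe {K V : Type*} [DivisionRing K] [AddCommGroup V] [Module K V]
    (P : Projectivization K V) (w : V) : Prop :=
  ∃ c : K, c ≠ 0 ∧ P.rep = c • w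

/-- `v ↦ B ⬝ v^q`, the vector form of a collineation `X ↦ B X^q`. -/
def cpiVec (q : ℕ) {K : Type*} [Field K] (B : Matrix (Fin 3) (Fin 3) K)
    (v : Fin 3 → K) : Fin 3 → K :=
  B.mulVec fun i => v i ^ q

/-- `v ↦ D ⬝ v^q` on a line (pairs of coordinates). -/
def cbVec (q : ℕ) {K : Type*} [Field K] (D : Matrix (Fin 2) (Fin 2) K)
    (v : Fin 2 → K) : Fin 2 → K :=
  D.mulVec fun i => v i ^ q

/-- The vector of the Bruck-Bose ambient extension placing the pair `(a,b)` in
Galois block `e` (a vector on the transversal line `g^{q^e}`). -/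
def gBlockVec {K : Type*} [Zero K] (e : Fin 3) (a b : K) : (Fin 3 → Fin 2 → K) × K :=
  (fun e' => if e' = e then ![a, b] else 0, 0)

/-- The Frobenius collineation `X ↦ X^q` on (extensions of) the Bruck-Bose ambient space. -/
def tauBB (q : ℕ) {K : Type*} [Field K] (w : (Fin 3 → Fin 2 → K) × K) :
    (Fin 3 → Fin 2 → K) × K :=
  (fun e k => w.1 (e - 1) k ^ q, w.2 ^ q)

/-- The vector of the Bose ambient extension placing `u` in Galois block `e`. -/
def blockVec {K : Type*} [Zero K] (e : Fin 3) (u : Fin 3 → K) : Fin 3 → Fin 3 → K :=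
  fun e' => if e' = e then u else 0

/-- The Frobenius collineation `X ↦ X^q` on (extensions of) the Bose ambient space. -/
def tauBose (q : ℕ) {K : Type*} [Field K] (w : Fin 3 → Fin 3 → K) : Fin 3 → Fin 3 → K :=
  fun e i => w (e - 1) i ^ q

/-- The transversal plane `Γ^{q^e}` of the Bose spread (as a set of vectors). -/
def GammaPlane {K : Type*} [Zero K] (e : Fin 3) : Set (Fin 3 → Fin 3 → K) :=
  {w | ∀ e', e' ≠ e → w e' = 0}

/-- The scroll plane `⟪X⟫_π = ⟨X, (X^{c_π^5})^q, (X^{c_π^4})^{q^2}⟩` of the point `X ∈ Γ`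
(or `Γ^{extension}`) with `Γ`-coordinate vector `u`, where `c_π` is given by the matrix `B`. -/
def scrollSub (q : ℕ) {K : Type*} [Field K] (B : Matrix (Fin 3) (Fin 3) K)
    (u : Fin 3 → K) : Submodule K (Fin 3 → Fin 3 → K) :=
  Submodule.span K
    {blockVec 0 u,
     blockVec 1 (fun i => ((cpiVec q B)^[5] u) i ^ q),
     blockVec 2 (fun i => ((cpiVec q B)^[4] u) i ^ q ^ 2)}

/-- The `b`-scroll plane `⟪X⟫_b = ⟨X, (X^{c_b^5})^q, (X^{c_b^4})^{q^2}⟩` of the point `X` of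
the transversal line `g` (or its extension) with coordinate pair `(a,b)`, where `c_b` is
given by the matrix `D`. -/
def bScrollSub (q : ℕ) {K : Type*} [Field K] (D : Matrix (Fin 2) (Fin 2) K)
    (a b : K) : Submodule K ((Fin 3 → Fin 2 → K) × K) :=
  Submodule.span K
    {gBlockVec 0 a b,
     gBlockVec 1 (((cbVec q D)^[5] ![a, b]) 0 ^ q) (((cbVec q D)^[5] ![a, b]) 1 ^ q),
     gBlockVec 2 (((cbVec q D)^[4] ![a, b]) 0 ^ q ^ 2) (((cbVec q D)^[4] ![a, b]) 1 ^ q ^ 2)}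

/-- `S` is a single point lying on one of the transversal planes (a T-point). -/
def IsTPointSet {K : Type*} [Field K]
    (S : Set (Projectivization K (Fin 3 → Fin 3 → K))) : Prop :=
  ∃ w : Fin 3 → Fin 3 → K, w ≠ 0 ∧ (∃ e, w ∈ GammaPlane e) ∧ S = {P | pe P w}

/-- `S` is the point set of a T-line: a line meeting two of the transversal planes. -/
def IsTLineSet {K : Type*} [Field K]
    (S : Set (Projectivization K (Fin 3 → Fin 3 → K))) : Prop :=
  ∃ (e e' : Fin 3) (u u' : Fin 3 → Fin 3 → K), e ≠ e' ∧ u ≠ 0 ∧ u' ≠ 0 ∧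
    u ∈ GammaPlane e ∧ u' ∈ GammaPlane e' ∧
    S = {P | ∃ s t : K, P.rep = s • u + t • u'}

/-- `S` is the point set of a T-plane: a plane meeting all three transversal planes. -/
def IsTPlaneSet {K : Type*} [Field K]
    (S : Set (Projectivization K (Fin 3 → Fin 3 → K))) : Prop :=
  ∃ u : Fin 3 → Fin 3 → Fin 3 → K, (∀ e, u e ∈ GammaPlane e) ∧ LinearIndependent K u ∧
    S = {P | P.rep ∈ Submodule.span K (Set.range u)}

/-- `S` is empty, a T-point, a T-line or a T-plane. -/
def TClass {K : Type*} [Field K]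
    (S : Set (Projectivization K (Fin 3 → Fin 3 → K))) : Prop :=
  S = ∅ ∨ IsTPointSet S ∨ IsTLineSet S ∨ IsTPlaneSet S

/-- `ζ` : the linear embedding of the (extended) Bruck-Bose ambient space into the
(extended) Bose ambient space, realising PG(6,q) as the 6-space `Σ_{6,q}` of PG(8,q). -/
def zetaBB {K : Type*} [Field K] (w : (Fin 3 → Fin 2 → K) × K) : Fin 3 → Fin 3 → K :=
  fun e => ![w.1 e 0, w.1 e 1, w.2]

section BruckBose

variable (Fq F3 F6 : Type) [Field Fq] [Field F3] [Field F6]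
  [Fintype Fq] [Fintype F3] [Fintype F6]
  [Algebra Fq F3] [Algebra F3 F6] [Algebra Fq F6] [IsScalarTower Fq F3 F6]

/-- The points of `PG(2,q^3)`. -/
abbrev Pt2 := Projectivization F3 (Fin 3 → F3)

/-- The points of the quadratic extension `PG(2,q^6)`. -/
abbrev Pt2e := Projectivization F6 (Fin 3 → F6)

/-- The line at infinity `ℓ∞` of `PG(2,q^3)`. -/
def linf : Set (Pt2 F3) := {P | P.rep 2 = 0}

/-- The extended line at infinity `ℓ∞⁺⁺` of `PG(2,q^6)`. -/
def linfe : Set (Pt2e F6) := {P | P.rep 2 = 0}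

/-- Representing vectors of the image under `M` of the standard `F_q`-subplane. -/
def subplaneVecs (M : Matrix (Fin 3) (Fin 3) F3) : Set (Fin 3 → F3) :=
  {u | ∃ a : Fin 3 → Fq, u = M.mulVec fun i => algebraMap Fq F3 (a i)}

/-- The `F_q`-subplane `π̄` of `PG(2,q^3)` determined by the invertible matrix `M`:
the image under `M` of the standard rational subplane.  (Every `F_q`-subplane arises
in this way.) -/
def subplaneOf (M : Matrix (Fin 3) (Fin 3) F3) : Set (Pt2 F3) :=
  {P | ∃ u ∈ subplaneVecs Fq F3 M, pe P u}

/-- Representing vectors of the image under `M` of the standard `F_q`-conic. -/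
def conicVecs (M : Matrix (Fin 3) (Fin 3) F3) : Set (Fin 3 → F3) :=
  {u | (∃ θ : Fq, u = M.mulVec fun i => algebraMap Fq F3 (![1, θ, θ ^ 2] i)) ∨
    u = M.mulVec ![0, 0, 1]}

/-- The `F_q`-conic `C̄` of `PG(2,q^3)` determined by the invertible matrix `M`: the image
under `M` of the standard conic of the standard rational subplane.  (Every `F_q`-conic of
an `F_q`-subplane arises this way.) -/
def conicOf (M : Matrix (Fin 3) (Fin 3) F3) : Set (Pt2 F3) :=
  {P | ∃ u ∈ conicVecs Fq F3 M, pe P u}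

/-- Representing vectors of `C̄⁺`, the unique `F_{q^3}`-conic containing `C̄ = conicOf M`. -/
def conicPlusVecs (M : Matrix (Fin 3) (Fin 3) F3) : Set (Fin 3 → F3) :=
  {u | (∃ θ : F3, u = M.mulVec ![1, θ, θ ^ 2]) ∨ u = M.mulVec ![0, 0, 1]}

/-- `C̄⁺`, the unique non-degenerate conic of `PG(2,q^3)` containing `C̄ = conicOf M`. -/
def conicPlusOf (M : Matrix (Fin 3) (Fin 3) F3) : Set (Pt2 F3) :=
  {P | ∃ u ∈ conicPlusVecs F3 M, pe P u}

/-- Representing vectors of `C̄⁺⁺`, the unique conic of `PG(2,q^6)` containing `C̄⁺`. -/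
def conicPPVecs (M : Matrix (Fin 3) (Fin 3) F3) : Set (Fin 3 → F6) :=
  {u | (∃ θ : F6, u = (M.map (algebraMap F3 F6)).mulVec ![1, θ, θ ^ 2]) ∨
    u = (M.map (algebraMap F3 F6)).mulVec ![0, 0, 1]}

/-- `C̄⁺⁺`, the unique conic of the quadratic extension `PG(2,q^6)` containing `C̄⁺`. -/
def conicPPOf (M : Matrix (Fin 3) (Fin 3) F3) : Set (Pt2e F6) :=
  {P | ∃ u ∈ conicPPVecs F3 F6 M, pe P u}

/-- The subplane determined by `M` is secant to `ℓ∞` (meets it in `q+1` points). -/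
def SecantSubplane (M : Matrix (Fin 3) (Fin 3) F3) : Prop :=
  (subplaneOf Fq F3 M ∩ linf F3).ncard = Fintype.card Fq + 1

/-- The subplane determined by `M` is tangent to `ℓ∞` (meets it in exactly one point). -/
def TangentSubplane (M : Matrix (Fin 3) (Fin 3) F3) : Prop :=
  (subplaneOf Fq F3 M ∩ linf F3).ncard = 1

/-- The subplane determined by `M` is exterior to `ℓ∞` (disjoint from it). -/
def ExteriorSubplane (M : Matrix (Fin 3) (Fin 3) F3) : Prop :=
  subplaneOf Fq F3 M ∩ linf F3 = ∅

/-- The collineation `X ↦ B X^q` is a generator of the unique order-3 collineation group of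
`PG(2,q^3)` fixing the subplane `subplaneOf M` pointwise (i.e. it is `c̄_π` or `c̄_π²`). -/
def IsCpiGen (M B : Matrix (Fin 3) (Fin 3) F3) : Prop :=
  IsUnit B.det ∧
  (∀ P ∈ subplaneOf Fq F3 M, pe P (cpiVec (Fintype.card Fq) B P.rep)) ∧
  (∀ P : Pt2 F3, pe P ((cpiVec (Fintype.card Fq) B)^[3] P.rep)) ∧
  (∃ P : Pt2 F3, ¬ pe P (cpiVec (Fintype.card Fq) B P.rep))

/-- The map `X ↦ D X^q` on `ℓ∞` (coordinatised by pairs) is a generator of the unique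
order-3 collineation group of `ℓ∞` fixing the `F_q`-subline `b̄ = subplaneOf M ∩ ℓ∞`
pointwise. -/
def IsCbGen (M : Matrix (Fin 3) (Fin 3) F3) (D : Matrix (Fin 2) (Fin 2) F3) : Prop :=
  IsUnit D.det ∧
  (∀ P ∈ subplaneOf Fq F3 M ∩ linf F3,
    ∃ c : F3, c ≠ 0 ∧
      cbVec (Fintype.card Fq) D ![P.rep 0, P.rep 1] = c • ![P.rep 0, P.rep 1]) ∧
  (∀ u : Fin 2 → F3, u ≠ 0 → ∃ c : F3, c ≠ 0 ∧ (cbVec (Fintype.card Fq) D)^[3] u = c • u) ∧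
  (∃ u : Fin 2 → F3, u ≠ 0 ∧ ¬ ∃ c : F3, c ≠ 0 ∧ cbVec (Fintype.card Fq) D u = c • u)

/-- `P' = P^{c̄_π}` where `c̄_π : X ↦ B X^q`. -/
def cptRel (B : Matrix (Fin 3) (Fin 3) F3) (P P' : Pt2 F3) : Prop :=
  pe P' (cpiVec (Fintype.card Fq) B P.rep)

/-- `E` is one of the two `(π̄,ℓ∞)`-carriers lying on `ℓ∞` (for `π̄` exterior to `ℓ∞`):
`E ∈ ℓ∞` and the image of `E` under `c̄_π` or `c̄_π²` again lies on `ℓ∞`. -/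
def IsCarrierOnLinf (B : Matrix (Fin 3) (Fin 3) F3) (E : Pt2 F3) : Prop :=
  E ∈ linf F3 ∧ ∃ E1 : Pt2 F3, cptRel Fq F3 B E E1 ∧ E1 ∈ linf F3

/-! ### The Bruck-Bose ambient spaces -/

/-- The 7-dimensional `Fq`-vector space underlying `PG(6,q)`. -/
abbrev V6 := (Fin 2 → F3) × Fq

/-- The points of `PG(6,q)`. -/
abbrev Pt6 := Projectivization Fq (V6 Fq F3)

/-- The cubic extension of `V6`, underlying `PG(6,q^3)`. -/
abbrev V63 := (Fin 3 → Fin 2 → F3) × F3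

/-- The points of `PG(6,q^3)`. -/
abbrev Pt63 := Projectivization F3 (V63 F3)

/-- The sextic extension of `V6`, underlying `PG(6,q^6)`. -/
abbrev V66 := (Fin 3 → Fin 2 → F6) × F6

/-- The points of `PG(6,q^6)`. -/
abbrev Pt66 := Projectivization F6 (V66 F6)

/-- The hyperplane at infinity `Σ∞` of `PG(6,q)` (as a point set). -/
def inf6 : Set (Pt6 Fq F3) := {P | P.rep.2 = 0}

/-- The extended hyperplane at infinity `Σ∞^*` in `PG(6,q^3)`. -/
def inf63 : Set (Pt63 F3) := {P | P.rep.2 = 0}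

/-- The extended hyperplane at infinity `Σ∞^☆` in `PG(6,q^6)`. -/
def inf66 : Set (Pt66 F6) := {P | P.rep.2 = 0}

/-- The vectors of the spread plane corresponding to the point `(x : y : 0)` of `ℓ∞`. -/
def spreadVecs (x y : F3) : Set (V6 Fq F3) := {v | ∃ l : F3, v = (![l * x, l * y], 0)}

/-- The points of the plane `[P]` of the regular 2-spread `S` corresponding to the
point `P̄ = (x : y : 0)` of `ℓ∞`. -/
def spreadPts (x y : F3) : Set (Pt6 Fq F3) := {P | P.rep ∈ spreadVecs Fq F3 x y}

/-- `s` is (the point set of) a plane of the regular 2-spread `S`. -/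
def IsSpreadPlane (s : Set (Pt6 Fq F3)) : Prop :=
  ∃ x y : F3, ¬(x = 0 ∧ y = 0) ∧ s = spreadPts Fq F3 x y

/-- The embedding of `V6` into its cubic extension `V63`. -/
def iota6 (v : V6 Fq F3) : V63 F3 :=
  (fun e k => v.1 k ^ Fintype.card Fq ^ (e : ℕ), algebraMap Fq F3 v.2)

/-- The embedding of `V6` into its sextic extension `V66`. -/
def iota66 (v : V6 Fq F3) : V66 F6 :=
  (fun e k => algebraMap F3 F6 (v.1 k ^ Fintype.card Fq ^ (e : ℕ)), algebraMap Fq F6 v.2)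

/-- The embedding of `V63` into `V66`. -/
def kappa6 (w : V63 F3) : V66 F6 :=
  (fun e k => algebraMap F3 F6 (w.1 e k), algebraMap F3 F6 w.2)

/-- A representing vector of `P^{q^e}` where `P` is the point of the transversal line `g`
with coordinate pair `(a,b) ∈ F_{q^3}²`. -/
def gOrbitVec3 (a b : F3) (e : Fin 3) : V63 F3 :=
  gBlockVec e (a ^ Fintype.card Fq ^ (e : ℕ)) (b ^ Fintype.card Fq ^ (e : ℕ))

/-- A representing vector of `P^{q^e}` where `P` is the point of the extended transversal
line `g^☆` with coordinate pair `(a,b) ∈ F_{q^6}²`. -/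
def gOrbitVec6 (a b : F6) (e : ℕ) : V66 F6 :=
  gBlockVec (Fin.ofNat 3 e) (a ^ Fintype.card Fq ^ e) (b ^ Fintype.card Fq ^ e)

/-- The vectors of the extension to `PG(6,q^3)` of the spread plane of `(x : y : 0)`. -/
def extSpreadVecs3 (x y : F3) : Set (V63 F3) :=
  {w | ∃ c : Fin 3 → F3, w = (fun e =>
    ![c e * x ^ Fintype.card Fq ^ (e : ℕ), c e * y ^ Fintype.card Fq ^ (e : ℕ)], 0)}

/-- The vectors of the extension to `PG(6,q^6)` of the spread plane of `(x : y : 0)`. -/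
def extSpreadVecs6 (x y : F3) : Set (V66 F6) :=
  {w | ∃ c : Fin 3 → F6, w = (fun e =>
    ![c e * algebraMap F3 F6 (x ^ Fintype.card Fq ^ (e : ℕ)),
      c e * algebraMap F3 F6 (y ^ Fintype.card Fq ^ (e : ℕ))], 0)}

/-- The point set in `PG(6,q)` of the `k`-dimensional normal rational curve with
parametrising vectors `v 0, …, v k`:  `{(1,θ,…,θ^k)} ∪ {(0,…,0,1)}` in the frame `v`. -/
def nrcPts6 {k : ℕ} (v : Fin (k + 1) → V6 Fq F3) : Set (Pt6 Fq F3) :=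
  {P | (∃ θ : Fq, pe P (∑ i : Fin (k + 1), θ ^ (i : ℕ) • v i)) ∨ pe P (v (Fin.last k))}

/-- The point set in `PG(6,q^3)` of the extension of the normal rational curve `v`. -/
def nrcPts63 {k : ℕ} (v : Fin (k + 1) → V6 Fq F3) : Set (Pt63 F3) :=
  {P | (∃ θ : F3, pe P (∑ i : Fin (k + 1), θ ^ (i : ℕ) • iota6 Fq F3 (v i))) ∨
    pe P (iota6 Fq F3 (v (Fin.last k)))}

/-- The point set in `PG(6,q^6)` of the extension of the normal rational curve `v`. -/
def nrcPts66 {k : ℕ} (v : Fin (k + 1) → V6 Fq F3) : Set (Pt66 F6) :=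
  {P | (∃ θ : F6, pe P (∑ i : Fin (k + 1), θ ^ (i : ℕ) • iota66 Fq F3 F6 (v i))) ∨
    pe P (iota66 Fq F3 F6 (v (Fin.last k)))}

/-- `N` is a `k`-dimensional normal rational curve of `PG(6,q)`. -/
def IsNRC (k : ℕ) (N : Set (Pt6 Fq F3)) : Prop :=
  ∃ v : Fin (k + 1) → V6 Fq F3, LinearIndependent Fq v ∧ N = nrcPts6 Fq F3 v

/-- The exact-at-infinity Bruck-Bose representation `[C]` of a point set `C` of
`PG(2,q^3)`: affine points go to affine points, and a point of `ℓ∞` goes to the whole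
corresponding spread plane. -/
def bbExact (C : Set (Pt2 F3)) : Set (Pt6 Fq F3) :=
  {Q | ∃ P ∈ C, (∃ x y : F3, pe P ![x, y, 1] ∧ pe Q (![x, y], (1 : Fq))) ∨
    (∃ x y : F3, pe P ![x, y, 0] ∧ Q ∈ spreadPts Fq F3 x y)}

/-- `N` is the Bruck-Bose representation (usual convention: linear components at infinity
ignored) of the point set `C` of `PG(2,q^3)`: `N` is contained in the exact-at-infinity
representation of `C` and contains all of its affine points. -/
def corrBB (C : Set (Pt2 F3)) (N : Set (Pt6 Fq F3)) : Prop :=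
  N ⊆ bbExact Fq F3 C ∧ ∀ Q ∈ bbExact Fq F3 C, Q ∉ inf6 Fq F3 → Q ∈ N

/-! ### The Bose ambient spaces -/

/-- The points of `PG(8,q^3)`. -/
abbrev Pt93 := Projectivization F3 (Fin 3 → Fin 3 → F3)

/-- The points of `PG(8,q^6)`. -/
abbrev Pt96 := Projectivization F6 (Fin 3 → Fin 3 → F6)

/-- The vectors of `Π_g^* = ⟨g, g^q, g^{q^2}⟩` in `PG(8,q^3)`, where `g` is the line of the
transversal plane `Γ` corresponding to the line `l` of `PG(2,q^3)`. -/
def PiG3 (l : Submodule F3 (Fin 3 → F3)) : Set (Fin 3 → Fin 3 → F3) :=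
  {w | ∀ e : Fin 3, ∃ v ∈ l, w e = fun i => v i ^ Fintype.card Fq ^ (e : ℕ)}

/-- The vectors of `Π_g^☆` in `PG(8,q^6)`. -/
def PiG6 (l : Submodule F3 (Fin 3 → F3)) : Set (Fin 3 → Fin 3 → F6) :=
  {w | ∀ e : Fin 3, w e ∈ Submodule.span F6
    {u : Fin 3 → F6 | ∃ v ∈ l, u = fun i => algebraMap F3 F6 (v i) ^ Fintype.card Fq ^ (e : ℕ)}}

/-- The extension to `PG(2,q^6)` of the line `l` of `PG(2,q^3)`. -/
def extLineF6 (l : Submodule F3 (Fin 3 → F3)) : Submodule F6 (Fin 3 → F6) :=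
  Submodule.span F6 {u | ∃ v ∈ l, u = fun i => algebraMap F3 F6 (v i)}

/-- The vectors of the point set of `V(⟦C⟧)^*` in `PG(8,q^3)` for the `F_q`-conic of `M`:
the union of the `π`-scroll planes of the points of `C⁺` (with `c_π` given by `B`). -/
def boseVar3 (M B : Matrix (Fin 3) (Fin 3) F3) : Set (Fin 3 → Fin 3 → F3) :=
  {w | ∃ u ∈ conicPlusVecs F3 M, w ∈ scrollSub (Fintype.card Fq) B u}

/-- The vectors of the point set of `V(⟦C⟧)^☆` in `PG(8,q^6)`: the union of the
`π`-scroll planes of the points of `C⁺⁺`. -/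
def boseVar6 (M B : Matrix (Fin 3) (Fin 3) F3) : Set (Fin 3 → Fin 3 → F6) :=
  {w | ∃ u ∈ conicPPVecs F3 F6 M,
    w ∈ scrollSub (Fintype.card Fq) (B.map (algebraMap F3 F6)) u}

/-- The point set of the variety-extension `V([C])^*` in `PG(6,q^3)`:
`V(⟦C⟧)^* ∩ Σ_{6,q}^*`, transported to the Bruck-Bose model via `ζ`. -/
def bbVar3 (M B : Matrix (Fin 3) (Fin 3) F3) : Set (Pt63 F3) :=
  {P | zetaBB P.rep ∈ boseVar3 Fq F3 M B}

/-- The point set of the variety-extension `V([C])^☆` in `PG(6,q^6)`. -/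
def bbVar6 (M B : Matrix (Fin 3) (Fin 3) F3) : Set (Pt66 F6) :=
  {P | zetaBB P.rep ∈ boseVar6 Fq F3 F6 M B}

/-- `L` is a T-line of `Σ∞^*`: a line meeting two of the transversal lines `g,g^q,g^{q^2}`
of the regular 2-spread. -/
def IsTLineBB (L : Submodule F3 (V63 F3)) : Prop :=
  ∃ (e e' : Fin 3) (a b a' b' : F3), e ≠ e' ∧ ¬(a = 0 ∧ b = 0) ∧ ¬(a' = 0 ∧ b' = 0) ∧
    L = Submodule.span F3 {gBlockVec e a b, gBlockVec e' a' b'}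

/-- The T-line `h^{q^e}` where `h = E (E^{c_π})^{q^2}`, `E` (resp. `E^{c_π}`) being the point
of the transversal `g` with coordinate pair `(a,b)` (resp. `(a',b')`). -/
def hLine (a b a' b' : F3) (e : Fin 3) : Submodule F3 (V63 F3) :=
  Submodule.span F3
    {gBlockVec e (a ^ Fintype.card Fq ^ (e : ℕ)) (b ^ Fintype.card Fq ^ (e : ℕ)),
     gBlockVec (e + 2) (a' ^ Fintype.card Fq ^ ((e : ℕ) + 2))
       (b' ^ Fintype.card Fq ^ ((e : ℕ) + 2))}

/-! ### 3-special normal rational curves -/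

/-- The pair `(a,b) ∈ F_{q^6}²` is proportional to an `F_{q^3}`-rational pair, i.e. the
corresponding point of the extended transversal line `g^☆` lies on `g`. -/
def rationalPair (a b : F6) : Prop :=
  ∃ (a0 b0 : F3) (c : F6), c ≠ 0 ∧ a = c * algebraMap F3 F6 a0 ∧ b = c * algebraMap F3 F6 b0

/-- The weight `w(P)` of a point `P` of `PG(5,q^6)` (given by a representing vector `w`):
1 if `P` is on an extended transversal line of the spread, 2 if not but `P` is on a line
meeting two of the extended transversal lines, 3 otherwise. -/
def weightV (w : V66 F6) : ℕ :=
  if ∃ (e : Fin 3) (a b : F6), w = gBlockVec e a b then 1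
  else if ∃ (e e' : Fin 3) (a b a' b' s t : F6), e ≠ e' ∧
      w = s • gBlockVec e a b + t • gBlockVec e' a' b' then 2
  else 3

/-- The orbit size `o(P)` of the point with representing vector `w` under the Frobenius
collineation `X ↦ X^q`. -/
def orbitSizeV (w : V66 F6) : ℕ :=
  Set.ncard {Q : Pt66 F6 | ∃ n : ℕ, pe Q ((tauBB (Fintype.card Fq))^[n] w)}

/-- `s(P) = 1` if `P` lies in an extended plane of the spread `S`, else `s(P) = 2`. -/
def sValV (w : V66 F6) : ℕ :=
  if ∃ x y : F3, ¬(x = 0 ∧ y = 0) ∧ w ∈ extSpreadVecs6 Fq F3 F6 x y then 1 else 2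

/-- The point of `PG(5,q^6)` with representing vector `w` is `S`-happy:
`w(P) ⬝ o(P) = 3 s(P)`. -/
def HappyV (w : V66 F6) : Prop :=
  weightV F6 w * orbitSizeV Fq F6 w = 3 * sValV Fq F3 F6 w

/-- The polynomial whose homogeneous roots give the points at infinity of the normal
rational curve parametrised by `v` (the last coordinates of the frame). -/
def infPoly {k : ℕ} (v : Fin (k + 1) → V6 Fq F3) : Polynomial Fq :=
  ∑ i : Fin (k + 1), Polynomial.C (v i).2 * Polynomial.X ^ (i : ℕ)

/-- The parametrised normal rational curve `v` is 3-special with respect to the regular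
2-spread `S`: it is not contained in `Σ∞`, all its points at infinity (with multiplicity,
including the point at the infinite parameter value) are defined over `F_{q^6}` and are
`S`-happy, and their weights sum to 6. -/
def Is3SpecialData {k : ℕ} (v : Fin (k + 1) → V6 Fq F3) : Prop :=
  infPoly Fq F3 v ≠ 0 ∧
  ((infPoly Fq F3 v).map (algebraMap Fq F6)).roots.card =
    ((infPoly Fq F3 v).map (algebraMap Fq F6)).natDegree ∧
  (∀ θ ∈ ((infPoly Fq F3 v).map (algebraMap Fq F6)).roots,
    HappyV Fq F3 F6 (∑ i : Fin (k + 1), θ ^ (i : ℕ) • iota66 Fq F3 F6 (v i))) ∧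
  (((infPoly Fq F3 v).map (algebraMap Fq F6)).natDegree < k →
    HappyV Fq F3 F6 (iota66 Fq F3 F6 (v (Fin.last k)))) ∧
  (((infPoly Fq F3 v).map (algebraMap Fq F6)).roots.map fun θ =>
      weightV F6 (∑ i : Fin (k + 1), θ ^ (i : ℕ) • iota66 Fq F3 F6 (v i))).sum +
    (k - ((infPoly Fq F3 v).map (algebraMap Fq F6)).natDegree) *
      weightV F6 (iota66 Fq F3 F6 (v (Fin.last k))) = 6

/-- `N` is a 3-special `k`-dimensional normal rational curve of `PG(6,q)` with respect to
the regular 2-spread `S`. -/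
def Is3Special (k : ℕ) (N : Set (Pt6 Fq F3)) : Prop :=
  ∃ v : Fin (k + 1) → V6 Fq F3, LinearIndependent Fq v ∧ N = nrcPts6 Fq F3 v ∧
    Is3SpecialData Fq F3 F6 v

end BruckBose

set_option linter.unusedSectionVars false
section BBAuxSection
open Polynomial
namespace BBAux



variable {K : Type*} [Field K]

/-- Division/Bezout splitting with degree control. -/
lemma cp_split {A B : K[X]} (hA : 1 ≤ A.natDegree) (h : IsCoprime A B) (p : K[X]) :
    ∃ s t : K[X], p = s * A + t * B ∧ t.natDegree < A.natDegree ∧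
      s.natDegree + A.natDegree ≤ max p.natDegree (A.natDegree + B.natDegree) := by
  have hA0 : A ≠ 0 := by intro h0; simp [h0] at hA
  obtain ⟨a, b, hab⟩ := h
  have hlc : A.leadingCoeff ≠ 0 := leadingCoeff_ne_zero.mpr hA0
  set A1 := A * C A.leadingCoeff⁻¹ with hA1
  have hmon : A1.Monic := monic_mul_leadingCoeff_inv hA0
  set t := (b * p) %ₘ A1 with ht
  set qq := (b * p) /ₘ A1 with hqq
  have hdiv : t + A1 * qq = b * p := modByMonic_add_div _ A1
  have hrep : p = (a * p + C A.leadingCoeff⁻¹ * qq * B) * A + t * B := by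
    have h1 : p = (a * A + b * B) * p := by rw [hab, one_mul]
    calc p = (a * A + b * B) * p := h1
      _ = a * p * A + (b * p) * B := by ring
      _ = a * p * A + (t + A * C A.leadingCoeff⁻¹ * qq) * B := by rw [← hA1, hdiv]
      _ = (a * p + C A.leadingCoeff⁻¹ * qq * B) * A + t * B := by ring
  have htdeg : t.natDegree < A.natDegree := by
    have hd : t.degree < A1.degree := degree_modByMonic_lt _ hmon
    have hdeq : A1.degree = A.degree := by
      rw [hA1, degree_mul, degree_C (inv_ne_zero hlc), add_zero]
    rcases eq_or_ne t 0 with h0 | h0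
    · simpa [h0] using (show 0 < A.natDegree by omega)
    · exact natDegree_lt_natDegree h0 (by rwa [hdeq] at hd)
  refine ⟨a * p + C A.leadingCoeff⁻¹ * qq * B, t, hrep, htdeg, ?_⟩
  set s := a * p + C A.leadingCoeff⁻¹ * qq * B with hs
  rcases eq_or_ne s 0 with h0 | h0
  · simp only [h0, natDegree_zero, zero_add]
    exact le_max_of_le_right (Nat.le_add_right _ _)
  · have hsA : s * A = p - t * B := by rw [hrep]; ring
    have h1 : (s * A).natDegree = s.natDegree + A.natDegree := natDegree_mul h0 hA0
    have h2 : (p - t * B).natDegree ≤ max p.natDegree (t * B).natDegree :=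
      natDegree_sub_le _ _
    have h3 : (t * B).natDegree ≤ A.natDegree + B.natDegree :=
      le_trans (natDegree_mul_le) (by omega)
    calc s.natDegree + A.natDegree = (p - t * B).natDegree := by rw [← h1, hsA]
      _ ≤ max p.natDegree (t * B).natDegree := h2
      _ ≤ max p.natDegree (A.natDegree + B.natDegree) := max_le_max le_rfl h3

/-- `p` is a combination of the `Qᵢ` with coefficients of degree at most 2. -/
def RepBound (Q0 Q1 Q2 p : K[X]) : Prop :=
  ∃ l0 l1 l2 : K[X], l0.natDegree ≤ 2 ∧ l1.natDegree ≤ 2 ∧ l2.natDegree ≤ 2 ∧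
    p = l0 * Q0 + l1 * Q1 + l2 * Q2

lemma isCoprime_of_isUnit_gcd {a b : K[X]} (hu : IsUnit (EuclideanDomain.gcd a b)) :
    IsCoprime a b := by
  set d := EuclideanDomain.gcd a b with hd
  have hbez := EuclideanDomain.gcd_eq_gcd_ab a b
  obtain ⟨u, huu⟩ := hu
  refine ⟨EuclideanDomain.gcdA a b * (↑u⁻¹ : K[X]ˣ), EuclideanDomain.gcdB a b * (↑u⁻¹ : K[X]ˣ), ?_⟩
  have : (↑u : K[X]) * (↑u⁻¹ : K[X]ˣ) = 1 := by
    rw [← Units.val_mul, mul_inv_cancel, Units.val_one]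
  calc EuclideanDomain.gcdA a b * (↑u⁻¹ : K[X]ˣ) * a +
        EuclideanDomain.gcdB a b * (↑u⁻¹ : K[X]ˣ) * b
      = (a * EuclideanDomain.gcdA a b + b * EuclideanDomain.gcdB a b) * (↑u⁻¹ : K[X]ˣ) := by
        ring
    _ = d * (↑u⁻¹ : K[X]ˣ) := by rw [← hbez]
    _ = 1 := by rw [← huu, this]

lemma isUnit_of_natDegree_zero {d : K[X]} (h0 : d ≠ 0) (hd : d.natDegree = 0) : IsUnit d := by
  obtain ⟨c, rfl⟩ := Polynomial.natDegree_eq_zero.mp hd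
  exact isUnit_C.mpr (isUnit_iff_ne_zero.mpr (by simpa using h0))

lemma rep_m0 {Q0 Q1 Q2 : K[X]} (h0 : Q0 ≠ 0) (hd : Q0.natDegree = 0) (p : K[X])
    (hp : p.natDegree ≤ 2) : RepBound Q0 Q1 Q2 p := by
  obtain ⟨c, rfl⟩ := Polynomial.natDegree_eq_zero.mp hd
  have hc : c ≠ 0 := by simpa using h0
  refine ⟨p * C c⁻¹, 0, 0, ?_, by simp, by simp, ?_⟩
  · exact le_trans natDegree_mul_le (by simp [hp])
  · rw [zero_mul, zero_mul, add_zero, add_zero, mul_assoc, ← C_mul, inv_mul_cancel₀ hc]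
    simp

lemma ne_zero_of_natDegree_pos {d : K[X]} {n : ℕ} (hn : 0 < n) (hd : d.natDegree = n) :
    d ≠ 0 := by
  intro h0
  rw [h0, natDegree_zero] at hd
  omega

/-- Extract the common-divisor data for a non-coprime pair. -/
lemma gcd_setup {Q0 Q1 : K[X]} (h00 : Q0 ≠ 0)
    (hu : ¬ IsUnit (EuclideanDomain.gcd Q0 Q1)) :
    ∃ d q0' q1' : K[X], Q0 = d * q0' ∧ Q1 = d * q1' ∧ IsCoprime q0' q1' ∧
      d ≠ 0 ∧ 1 ≤ d.natDegree := by
  set d := EuclideanDomain.gcd Q0 Q1 with hdgcd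
  have hd0' : d ≠ 0 := by
    intro h0
    rw [hdgcd] at h0
    exact h00 (EuclideanDomain.gcd_eq_zero_iff.mp h0).1
  obtain ⟨q0', hq0'⟩ : d ∣ Q0 := EuclideanDomain.gcd_dvd_left _ _
  obtain ⟨q1', hq1'⟩ : d ∣ Q1 := EuclideanDomain.gcd_dvd_right _ _
  have hbez := EuclideanDomain.gcd_eq_gcd_ab Q0 Q1
  have hcop : IsCoprime q0' q1' := by
    refine ⟨EuclideanDomain.gcdA Q0 Q1, EuclideanDomain.gcdB Q0 Q1, ?_⟩
    have : d * (EuclideanDomain.gcdA Q0 Q1 * q0' + EuclideanDomain.gcdB Q0 Q1 * q1') = d * 1 := by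
      rw [mul_one]
      calc d * (EuclideanDomain.gcdA Q0 Q1 * q0' + EuclideanDomain.gcdB Q0 Q1 * q1')
          = (d * q0') * EuclideanDomain.gcdA Q0 Q1 + (d * q1') * EuclideanDomain.gcdB Q0 Q1 := by
            ring
        _ = Q0 * EuclideanDomain.gcdA Q0 Q1 + Q1 * EuclideanDomain.gcdB Q0 Q1 := by
            rw [← hq0', ← hq1']
        _ = d := hbez.symm
    have := mul_left_cancel₀ hd0' this
    linear_combination this
  have hdd : 1 ≤ d.natDegree := by
    by_contra h1
    exact hu (isUnit_of_natDegree_zero hd0' (by omega))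
  exact ⟨d, q0', q1', hq0', hq1', hcop, hd0', hdd⟩

lemma rep_m1 {Q0 Q1 Q2 : K[X]} (hd0 : Q0.natDegree = 1) (hd1 : Q1.natDegree = 1)
    (hd2 : Q2.natDegree = 1) (hBez : ∃ a b c : K[X], a * Q0 + b * Q1 + c * Q2 = 1)
    (p : K[X]) (hp : p.natDegree ≤ 3) : RepBound Q0 Q1 Q2 p := by
  have h00 : Q0 ≠ 0 := ne_zero_of_natDegree_pos one_pos hd0
  by_cases hu : IsUnit (EuclideanDomain.gcd Q0 Q1)
  · have hcop : IsCoprime Q0 Q1 := isCoprime_of_isUnit_gcd hu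
    obtain ⟨s, t, hrep, ht, hs⟩ := cp_split (by omega) hcop p
    refine ⟨s, t, 0, by omega, by omega, by simp, by rw [hrep]; ring⟩
  · obtain ⟨d, q0', q1', hq0', hq1', hcop', hd0', hdd⟩ := gcd_setup h00 hu
    have hddle : d.natDegree ≤ 1 := hd0 ▸ natDegree_le_of_dvd ⟨q0', hq0'⟩ h00
    have hq0'0 : q0' ≠ 0 := by rintro rfl; rw [mul_zero] at hq0'; exact h00 hq0'
    have hq0deg : q0'.natDegree = 0 := by
      have := natDegree_mul hd0' hq0'0
      rw [← hq0', hd0] at this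
      omega
    obtain ⟨c0, hc0⟩ := Polynomial.natDegree_eq_zero.mp hq0deg
    have hc00 : c0 ≠ 0 := by rintro rfl; rw [← hc0] at hq0'0; simp at hq0'0
    -- IsCoprime d Q2
    obtain ⟨a, b, c, habc⟩ := hBez
    have hcd2 : IsCoprime d Q2 := by
      refine ⟨a * q0' + b * q1', c, ?_⟩
      calc (a * q0' + b * q1') * d + c * Q2
          = a * (d * q0') + b * (d * q1') + c * Q2 := by ring
        _ = 1 := by rw [← hq0', ← hq1']; exact habc
    obtain ⟨s, t, hrep, ht, hs⟩ := cp_split (by omega) hcd2 p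
    refine ⟨s * C c0⁻¹, 0, t, ?_, by simp, by omega, ?_⟩
    · exact le_trans natDegree_mul_le (by simp; omega)
    · have hdQ0 : d = Q0 * C c0⁻¹ := by
        rw [hq0', ← hc0, mul_assoc, ← C_mul, mul_inv_cancel₀ hc00, C_1, mul_one]
      rw [hrep, hdQ0]; ring

lemma rep_m2 {Q0 Q1 Q2 : K[X]} (hd0 : Q0.natDegree = 2) (hd1 : Q1.natDegree = 2)
    (hd2 : Q2.natDegree = 2) (hBez : ∃ a b c : K[X], a * Q0 + b * Q1 + c * Q2 = 1)
    (p : K[X]) (hp : p.natDegree ≤ 4) : RepBound Q0 Q1 Q2 p := by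
  have h00 : Q0 ≠ 0 := ne_zero_of_natDegree_pos two_pos hd0
  by_cases hu : IsUnit (EuclideanDomain.gcd Q0 Q1)
  · have hcop : IsCoprime Q0 Q1 := isCoprime_of_isUnit_gcd hu
    obtain ⟨s, t, hrep, ht, hs⟩ := cp_split (show 1 ≤ Q0.natDegree by omega) hcop p
    refine ⟨s, t, 0, by omega, by omega, by simp, by rw [hrep]; ring⟩
  · obtain ⟨d, q0', q1', hq0', hq1', hcop', hd0', hdd⟩ := gcd_setup h00 hu
    have hddle : d.natDegree ≤ 2 := hd0 ▸ natDegree_le_of_dvd ⟨q0', hq0'⟩ h00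
    have hq0'0 : q0' ≠ 0 := by rintro rfl; rw [mul_zero] at hq0'; exact h00 hq0'
    have h10 : Q1 ≠ 0 := ne_zero_of_natDegree_pos two_pos hd1
    have hq1'0 : q1' ≠ 0 := by rintro rfl; rw [mul_zero] at hq1'; exact h10 hq1'
    have hq0deg : d.natDegree + q0'.natDegree = 2 := by
      have := natDegree_mul hd0' hq0'0
      rw [← hq0', hd0] at this
      omega
    have hq1deg : d.natDegree + q1'.natDegree = 2 := by
      have := natDegree_mul hd0' hq1'0
      rw [← hq1', hd1] at this
      omega
    obtain ⟨a, b, c, habc⟩ := hBez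
    have hcd2 : IsCoprime d Q2 := by
      refine ⟨a * q0' + b * q1', c, ?_⟩
      calc (a * q0' + b * q1') * d + c * Q2
          = a * (d * q0') + b * (d * q1') + c * Q2 := by ring
        _ = 1 := by rw [← hq0', ← hq1']; exact habc
    obtain ⟨s, t, hrep, ht, hs⟩ := cp_split (by omega) hcd2 p
    -- deg d = 2 or 1
    rcases (show d.natDegree = 1 ∨ d.natDegree = 2 by omega) with hdeg | hdeg
    · -- d linear, q0' q1' linear coprime; write s = a' * q0' + b' * q1'
      obtain ⟨a', b', hrep2, ht2, hs2⟩ :=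
        cp_split (show 1 ≤ q0'.natDegree by omega) hcop' s
      refine ⟨a', b', t, ?_, ?_, by omega, ?_⟩
      · have : q0'.natDegree = 1 := by omega
        rw [this] at hs2
        have : q1'.natDegree = 1 := by omega
        rw [this] at hs2
        omega
      · omega
      · rw [hrep, hrep2, hq0', hq1']; ring
    · -- d has degree 2, q0' is a nonzero constant
      have hq0d : q0'.natDegree = 0 := by omega
      obtain ⟨c0, hc0⟩ := Polynomial.natDegree_eq_zero.mp hq0d
      have hc00 : c0 ≠ 0 := by rintro rfl; rw [← hc0] at hq0'0; simp at hq0'0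
      refine ⟨s * C c0⁻¹, 0, t, ?_, by simp, by omega, ?_⟩
      · exact le_trans natDegree_mul_le (by simp; omega)
      · have hdQ0 : d = Q0 * C c0⁻¹ := by
          rw [hq0', ← hc0, mul_assoc, ← C_mul, mul_inv_cancel₀ hc00, C_1, mul_one]
        rw [hrep, hdQ0]; ring

lemma rep_m4 {A0 A1 A2 : K[X]} (h0 : A0.natDegree = 2) (h1 : A1.natDegree = 2)
    (h2 : A2.natDegree = 2) (c01 : IsCoprime A0 A1) (c02 : IsCoprime A0 A2)
    (c12 : IsCoprime A1 A2) (p : K[X]) (hp : p.natDegree ≤ 6) :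
    RepBound (A1 * A2) (A2 * A0) (A0 * A1) p := by
  have h10 : A1 ≠ 0 := ne_zero_of_natDegree_pos two_pos h1
  have h20 : A2 ≠ 0 := ne_zero_of_natDegree_pos two_pos h2
  have hcop : IsCoprime A0 (A1 * A2) := c01.mul_right c02
  obtain ⟨s, t, hrep, ht, hs⟩ := cp_split (show 1 ≤ A0.natDegree by omega) hcop p
  have hA12 : (A1 * A2).natDegree = 4 := by rw [natDegree_mul h10 h20]; omega
  obtain ⟨s2, t2, hrep2, ht2, hs2⟩ := cp_split (show 1 ≤ A1.natDegree by omega) c12 s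
  have hb1 : max p.natDegree (A0.natDegree + (A1 * A2).natDegree) ≤ 6 :=
    max_le hp (by omega)
  have hb2 : max s.natDegree (A1.natDegree + A2.natDegree) ≤ 4 :=
    max_le (by omega) (by omega)
  refine ⟨t, t2, s2, by omega, by omega, by omega, ?_⟩
  rw [hrep, hrep2]; ring

variable {K : Type*} [Field K]

lemma coeff_mul_of_le {p q : K[X]} {a b : ℕ} (hp : p.natDegree ≤ a) (hq : q.natDegree ≤ b) :
    (p * q).coeff (a + b) = p.coeff a * q.coeff b := by
  rw [coeff_mul]
  refine Finset.sum_eq_single (a, b) ?_ ?_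
  · rintro ⟨i, j⟩ hij hne
    rw [Finset.HasAntidiagonal.mem_antidiagonal] at hij
    rcases lt_or_ge a i with hlt | hle
    · rw [coeff_eq_zero_of_natDegree_lt (lt_of_le_of_lt hp hlt), zero_mul]
    · have hia : i ≠ a ∨ j ≠ b := by
        by_contra hcon
        push_neg at hcon
        exact hne (by simp [hcon.1, hcon.2])
      have hj : b < j := by
        rcases hia with h | h
        · omega
        · omega
      rw [coeff_eq_zero_of_natDegree_lt (lt_of_le_of_lt hq hj), mul_zero]
  · intro hmem
    exfalso
    exact hmem (Finset.HasAntidiagonal.mem_antidiagonal.mpr rfl)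

lemma rowspan_monomial (N : Matrix (Fin 3) (Fin 3) K) (hN : IsUnit N.det) (a : Fin 3) :
    (X : K[X]) ^ (a : ℕ) = ∑ j : Fin 3, C (N⁻¹ a j) * (∑ i : Fin 3, C (N j i) * X ^ (i : ℕ)) := by
  have hinv := Matrix.nonsing_inv_mul N hN
  have step : ∀ j : Fin 3, C (N⁻¹ a j) * (∑ i : Fin 3, C (N j i) * X ^ (i : ℕ))
      = ∑ i : Fin 3, C (N⁻¹ a j * N j i) * X ^ (i : ℕ) := by
    intro j
    rw [Finset.mul_sum]
    refine Finset.sum_congr rfl fun i _ => ?_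
    rw [← mul_assoc, ← C_mul]
  calc (X : K[X]) ^ (a : ℕ)
      = ∑ i : Fin 3, C ((1 : Matrix (Fin 3) (Fin 3) K) a i) * X ^ (i : ℕ) := by
        rw [Finset.sum_eq_single a]
        · simp [Matrix.one_apply]
        · intro i _ hne
          rw [Matrix.one_apply_ne (Ne.symm hne), C_0, zero_mul]
        · intro h; exact absurd (Finset.mem_univ a) h
    _ = ∑ i : Fin 3, C ((N⁻¹ * N) a i) * X ^ (i : ℕ) := by rw [hinv]
    _ = ∑ i : Fin 3, ∑ j : Fin 3, C (N⁻¹ a j * N j i) * X ^ (i : ℕ) := by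
        refine Finset.sum_congr rfl fun i _ => ?_
        rw [Matrix.mul_apply, map_sum, Finset.sum_mul]
    _ = ∑ j : Fin 3, ∑ i : Fin 3, C (N⁻¹ a j * N j i) * X ^ (i : ℕ) := Finset.sum_comm
    _ = ∑ j : Fin 3, C (N⁻¹ a j) * (∑ i : Fin 3, C (N j i) * X ^ (i : ℕ)) := by
        refine Finset.sum_congr rfl fun j _ => (step j).symm

/-- In a field extension `L` of the finite field `Fq`, any solution of `x^q = x`
comes from `Fq`. -/
lemma fixed_mem_range (Fq L : Type*) [Field Fq] [Fintype Fq] [Field L] [Algebra Fq L]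
    {x : L} (hx : x ^ Fintype.card Fq = x) : ∃ a : Fq, algebraMap Fq L a = x := by
  set q := Fintype.card Fq with hq
  have hq2 : 2 ≤ q := Fintype.one_lt_card
  set P : L[X] := X ^ q - X with hP
  have hPdeg : P.natDegree = q := by
    have h1 : ((X : L[X]) ^ q).natDegree = q := natDegree_X_pow q
    rw [hP]
    rw [natDegree_sub_eq_left_of_natDegree_lt]
    · exact h1
    · rw [h1, natDegree_X]; omega
  have hP0 : P ≠ 0 := by
    intro h0
    rw [h0, natDegree_zero] at hPdeg
    omega
  have hroot : ∀ a : Fq, (algebraMap Fq L a) ∈ P.roots := by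
    intro a
    rw [mem_roots hP0]
    simp only [hP, IsRoot, eval_sub, eval_pow, eval_X]
    rw [← map_pow, FiniteField.pow_card, sub_self]
  set Φ : Finset L := Finset.univ.image (algebraMap Fq L) with hΦ
  have hΦcard : Φ.card = q := by
    rw [hΦ, Finset.card_image_of_injective _ (algebraMap Fq L).injective, Finset.card_univ]
  have hsub : Φ ⊆ P.roots.toFinset := by
    intro y hy
    rw [hΦ, Finset.mem_image] at hy
    obtain ⟨a, _, rfl⟩ := hy
    rw [Multiset.mem_toFinset]
    exact hroot a
  have hle : P.roots.toFinset.card ≤ q := by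
    calc P.roots.toFinset.card ≤ Multiset.card P.roots := P.roots.toFinset_card_le
      _ ≤ P.natDegree := P.card_roots'
      _ = q := hPdeg
  have heq : Φ = P.roots.toFinset := Finset.eq_of_subset_of_card_le hsub (by omega)
  have hxroot : x ∈ P.roots.toFinset := by
    rw [Multiset.mem_toFinset, mem_roots hP0]
    simp [hP, IsRoot, hx]
  rw [← heq, hΦ, Finset.mem_image] at hxroot
  obtain ⟨a, _, ha⟩ := hxroot
  exact ⟨a, ha⟩



section Frob
variable (Fq : Type*) [Field Fq] [Fintype Fq]
variable (L : Type*) [Field L] [Algebra Fq L]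

lemma exists_charP : ∃ p n : ℕ, Nat.Prime p ∧ Fintype.card Fq = p ^ n ∧ CharP L p := by
  haveI : CharP Fq (ringChar Fq) := ringChar.charP Fq
  obtain ⟨n, hp, hcard⟩ := FiniteField.card Fq (ringChar Fq)
  exact ⟨ringChar Fq, n, hp, hcard,
    charP_of_injective_algebraMap (algebraMap Fq L).injective _⟩

/-- The `q`-power Frobenius on an `Fq`-algebra field. -/
def frobQ : L →+* L where
  toFun x := x ^ Fintype.card Fq
  map_one' := one_pow _
  map_mul' x y := mul_pow x y _
  map_zero' := zero_pow Fintype.card_ne_zero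
  map_add' := by
    obtain ⟨p, n, hp, hcard, hchar⟩ := exists_charP Fq L
    intro x y
    haveI : Fact p.Prime := ⟨hp⟩
    haveI := hchar
    simp only [hcard]
    exact add_pow_char_pow x y p n

@[simp] lemma frobQ_apply (x : L) : frobQ Fq L x = x ^ Fintype.card Fq := rfl

/-- Iterated Frobenius. -/
def frobQn : ℕ → (L →+* L)
  | 0 => RingHom.id L
  | e + 1 => (frobQ Fq L).comp (frobQn e)

lemma frobQn_apply (e : ℕ) (x : L) : frobQn Fq L e x = x ^ Fintype.card Fq ^ e := by
  induction e with
  | zero => simp [frobQn]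
  | succ e ih =>
    show frobQ Fq L (frobQn Fq L e x) = _
    rw [ih, frobQ_apply, ← pow_mul, pow_succ]

lemma frobQn_fix (e : ℕ) (a : Fq) :
    frobQn Fq L e (algebraMap Fq L a) = algebraMap Fq L a := by
  rw [frobQn_apply, ← map_pow]
  induction e with
  | zero => simp
  | succ e ih =>
    rw [pow_succ, pow_mul, FiniteField.pow_card]
    exact ih

lemma frobQ_comp_frobQn (e : ℕ) :
    (frobQ Fq L).comp (frobQn Fq L e) = frobQn Fq L (e + 1) := rfl

lemma frobQn_comp_frobQ (e : ℕ) :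
    (frobQn Fq L e).comp (frobQ Fq L) = frobQn Fq L (e + 1) := by
  ext x
  simp only [RingHom.coe_comp, Function.comp_apply, frobQn_apply, frobQ_apply]
  rw [← pow_mul, ← pow_succ']

end Frob

section Frob3
variable (Fq F3 : Type*) [Field Fq] [Fintype Fq] [Field F3] [Fintype F3] [Algebra Fq F3]

lemma frobQn3_fix (h3 : Fintype.card F3 = Fintype.card Fq ^ 3) (x : F3) :
    frobQn Fq F3 3 x = x := by
  rw [frobQn_apply, ← h3, FiniteField.pow_card]

lemma frobQn3_id (h3 : Fintype.card F3 = Fintype.card Fq ^ 3) :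
    frobQn Fq F3 3 = RingHom.id F3 := by
  ext x
  rw [frobQn3_fix Fq F3 h3, RingHom.id_apply]

end Frob3


/-- `(p.map φ).eval x = φ (p.eval y)` when `x = φ y`. -/
lemma eval_map_hom {R S : Type*} [CommSemiring R] [CommSemiring S] (φ : R →+* S)
    (p : R[X]) (x : R) : (p.map φ).eval (φ x) = φ (p.eval x) := by
  rw [eval_map, eval₂_hom]

lemma frobQn_fix_of_fix {Fq L : Type*} [Field Fq] [Fintype Fq] [Field L] [Algebra Fq L]
    {x : L} (hx : frobQ Fq L x = x) (e : ℕ) : frobQn Fq L e x = x := by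
  induction e with
  | zero => rfl
  | succ e ih =>
    show frobQ Fq L (frobQn Fq L e x) = x
    rw [ih, hx]

section Geom
variable (Fq F3 : Type*) [Field Fq] [Fintype Fq] [Field F3] [Fintype F3] [Algebra Fq F3]
variable (M : Matrix (Fin 3) (Fin 3) F3)

/-- The row polynomials of `M`. -/
def upoly (j : Fin 3) : F3[X] := ∑ i : Fin 3, C (M j i) * X ^ (i : ℕ)

lemma upoly_explicit (j : Fin 3) :
    upoly F3 M j = C (M j 0) + C (M j 1) * X + C (M j 2) * X ^ 2 := by
  rw [upoly, Fin.sum_univ_three]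
  simp [pow_one]

lemma upoly_natDegree (j : Fin 3) : (upoly F3 M j).natDegree ≤ 2 := by
  rw [upoly_explicit]
  compute_degree

lemma upoly_coeff (j : Fin 3) (i : Fin 3) : (upoly F3 M j).coeff (i : ℕ) = M j i := by
  rw [upoly_explicit]
  fin_cases i <;> simp [coeff_one]

lemma upoly_eval (j : Fin 3) (x : F3) :
    (upoly F3 M j).eval x = M j 0 + M j 1 * x + M j 2 * x ^ 2 := by
  rw [upoly_explicit]; simp

lemma upoly_ne_zero (hM : IsUnit M.det) (j : Fin 3) : upoly F3 M j ≠ 0 := by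
  intro h0
  have hrow : ∀ i : Fin 3, M j i = 0 := by
    intro i
    rw [← upoly_coeff F3 M j i, h0, coeff_zero]
  exact hM.ne_zero (Matrix.det_eq_zero_of_row_eq_zero j hrow)

/-- The Frobenius conjugates of the `f`-polynomial (last row of `M`). -/
def fe (e : ℕ) : F3[X] := (upoly F3 M 2).map (frobQn Fq F3 e)

lemma fe_zero : fe Fq F3 M 0 = upoly F3 M 2 := by
  show (upoly F3 M 2).map (RingHom.id F3) = _
  rw [map_id]

lemma fe_map_frobQ (e : ℕ) : (fe Fq F3 M e).map (frobQ Fq F3) = fe Fq F3 M (e + 1) := by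
  rw [fe, fe, map_map, frobQ_comp_frobQn]

lemma fe_ne_zero (hM : IsUnit M.det) (e : ℕ) : fe Fq F3 M e ≠ 0 := by
  rw [fe]
  intro h0
  exact upoly_ne_zero F3 M hM 2 ((Polynomial.map_eq_zero _).mp h0)

lemma fe_natDegree (e : ℕ) : (fe Fq F3 M e).natDegree = (upoly F3 M 2).natDegree :=
  natDegree_map _

lemma frobQn_add (a b : ℕ) (x : F3) :
    frobQn Fq F3 (a + b) x = frobQn Fq F3 a (frobQn Fq F3 b x) := by
  simp only [frobQn_apply]
  rw [← pow_mul, ← pow_add]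
  ring_nf

lemma fe_add_three (h3 : Fintype.card F3 = Fintype.card Fq ^ 3) (e : ℕ) :
    fe Fq F3 M (e + 3) = fe Fq F3 M e := by
  have hcomp : frobQn Fq F3 (e + 3) = (frobQn Fq F3 e).comp (frobQn Fq F3 3) := by
    ext x
    exact frobQn_add Fq F3 e 3 x
  rw [fe, hcomp, ← map_map, ← fe]
  rw [show (fe Fq F3 M 3 : F3[X]) = (upoly F3 M 2).map (frobQn Fq F3 3) from rfl]
  rw [frobQn3_id Fq F3 h3, map_id, fe]

lemma fe_eval_fix (e : ℕ) (x : F3) (hx : frobQ Fq F3 x = x) :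
    (fe Fq F3 M e).eval x = frobQn Fq F3 e ((upoly F3 M 2).eval x) := by
  have h1 : frobQn Fq F3 e x = x := frobQn_fix_of_fix hx e
  calc (fe Fq F3 M e).eval x = (fe Fq F3 M e).eval (frobQn Fq F3 e x) := by rw [h1]
    _ = frobQn Fq F3 e ((upoly F3 M 2).eval x) := eval_map_hom _ _ _

end Geom

section Geom2
variable (Fq F3 : Type*) [Field Fq] [Fintype Fq] [Field F3] [Fintype F3] [Algebra Fq F3]
variable (M : Matrix (Fin 3) (Fin 3) F3)

def P12 : F3[X] := fe Fq F3 M 1 * fe Fq F3 M 2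
def P20 : F3[X] := fe Fq F3 M 2 * fe Fq F3 M 0
def P01 : F3[X] := fe Fq F3 M 0 * fe Fq F3 M 1

def gg : F3[X] :=
  EuclideanDomain.gcd (P12 Fq F3 M) (EuclideanDomain.gcd (P20 Fq F3 M) (P01 Fq F3 M))

def hh : F3[X] := gg Fq F3 M * C (gg Fq F3 M).leadingCoeff⁻¹

lemma P12_ne_zero (hM : IsUnit M.det) : P12 Fq F3 M ≠ 0 :=
  mul_ne_zero (fe_ne_zero Fq F3 M hM 1) (fe_ne_zero Fq F3 M hM 2)
lemma P20_ne_zero (hM : IsUnit M.det) : P20 Fq F3 M ≠ 0 :=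
  mul_ne_zero (fe_ne_zero Fq F3 M hM 2) (fe_ne_zero Fq F3 M hM 0)
lemma P01_ne_zero (hM : IsUnit M.det) : P01 Fq F3 M ≠ 0 :=
  mul_ne_zero (fe_ne_zero Fq F3 M hM 0) (fe_ne_zero Fq F3 M hM 1)

lemma gg_dvd_P12 : gg Fq F3 M ∣ P12 Fq F3 M := EuclideanDomain.gcd_dvd_left _ _
lemma gg_dvd_P20 : gg Fq F3 M ∣ P20 Fq F3 M :=
  dvd_trans (EuclideanDomain.gcd_dvd_right _ _) (EuclideanDomain.gcd_dvd_left _ _)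
lemma gg_dvd_P01 : gg Fq F3 M ∣ P01 Fq F3 M :=
  dvd_trans (EuclideanDomain.gcd_dvd_right _ _) (EuclideanDomain.gcd_dvd_right _ _)

lemma gg_ne_zero (hM : IsUnit M.det) : gg Fq F3 M ≠ 0 := by
  intro h0
  exact P12_ne_zero Fq F3 M hM (EuclideanDomain.gcd_eq_zero_iff.mp h0).1

lemma hh_monic (hM : IsUnit M.det) : (hh Fq F3 M).Monic :=
  monic_mul_leadingCoeff_inv (gg_ne_zero Fq F3 M hM)

lemma hh_ne_zero (hM : IsUnit M.det) : hh Fq F3 M ≠ 0 := (hh_monic Fq F3 M hM).ne_zero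

lemma hh_mul_C (hM : IsUnit M.det) : hh Fq F3 M * C (gg Fq F3 M).leadingCoeff = gg Fq F3 M := by
  have hlc : (gg Fq F3 M).leadingCoeff ≠ 0 := leadingCoeff_ne_zero.mpr (gg_ne_zero Fq F3 M hM)
  rw [hh, mul_assoc, ← C_mul, inv_mul_cancel₀ hlc, C_1, mul_one]

lemma hh_dvd_gg : hh Fq F3 M ∣ gg Fq F3 M ∧ gg Fq F3 M ∣ hh Fq F3 M := by
  constructor
  · by_cases hgg : gg Fq F3 M = 0
    · rw [hh, hgg]; simp
    · exact Dvd.intro _ (by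
        have hlc : (gg Fq F3 M).leadingCoeff ≠ 0 := leadingCoeff_ne_zero.mpr hgg
        rw [hh, mul_assoc, ← C_mul, inv_mul_cancel₀ hlc, C_1, mul_one])
  · exact Dvd.intro _ rfl

lemma hh_dvd_P12 : hh Fq F3 M ∣ P12 Fq F3 M :=
  dvd_trans (hh_dvd_gg Fq F3 M).1 (gg_dvd_P12 Fq F3 M)
lemma hh_dvd_P20 : hh Fq F3 M ∣ P20 Fq F3 M :=
  dvd_trans (hh_dvd_gg Fq F3 M).1 (gg_dvd_P20 Fq F3 M)
lemma hh_dvd_P01 : hh Fq F3 M ∣ P01 Fq F3 M :=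
  dvd_trans (hh_dvd_gg Fq F3 M).1 (gg_dvd_P01 Fq F3 M)

lemma dvd_hh_of {d : F3[X]} (h1 : d ∣ P12 Fq F3 M) (h2 : d ∣ P20 Fq F3 M)
    (h3 : d ∣ P01 Fq F3 M) : d ∣ hh Fq F3 M := by
  have hgg : d ∣ gg Fq F3 M :=
    EuclideanDomain.dvd_gcd h1 (EuclideanDomain.dvd_gcd h2 h3)
  exact dvd_trans hgg (hh_dvd_gg Fq F3 M).2

lemma map_frobQ_P12 (h3 : Fintype.card F3 = Fintype.card Fq ^ 3) :
    (P12 Fq F3 M).map (frobQ Fq F3) = P20 Fq F3 M := by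
  rw [P12, Polynomial.map_mul, fe_map_frobQ, fe_map_frobQ]
  rw [show (2:ℕ)+1 = 3 from rfl, show fe Fq F3 M 3 = fe Fq F3 M 0 from fe_add_three Fq F3 M h3 0]
  rw [P20]

lemma map_frobQ_P20 (h3 : Fintype.card F3 = Fintype.card Fq ^ 3) :
    (P20 Fq F3 M).map (frobQ Fq F3) = P01 Fq F3 M := by
  rw [P20, Polynomial.map_mul, fe_map_frobQ, fe_map_frobQ]
  rw [show (2:ℕ)+1 = 3 from rfl, show fe Fq F3 M 3 = fe Fq F3 M 0 from fe_add_three Fq F3 M h3 0]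
  rw [P01, mul_comm]

lemma map_frobQ_P01 (h3 : Fintype.card F3 = Fintype.card Fq ^ 3) :
    (P01 Fq F3 M).map (frobQ Fq F3) = P12 Fq F3 M := by
  rw [P01, Polynomial.map_mul, fe_map_frobQ, fe_map_frobQ]
  rw [P12]

lemma hh_map (h3 : Fintype.card F3 = Fintype.card Fq ^ 3) (hM : IsUnit M.det) :
    (hh Fq F3 M).map (frobQ Fq F3) = hh Fq F3 M := by
  set σ := frobQ Fq F3
  have hmon : (hh Fq F3 M).Monic := hh_monic Fq F3 M hM
  have hmonσ : ((hh Fq F3 M).map σ).Monic := hmon.map σ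
  have hσdvd : (hh Fq F3 M).map σ ∣ hh Fq F3 M := by
    apply dvd_hh_of
    · have := Polynomial.map_dvd σ (hh_dvd_P01 Fq F3 M)
      rwa [map_frobQ_P01 Fq F3 M h3] at this
    · have := Polynomial.map_dvd σ (hh_dvd_P12 Fq F3 M)
      rwa [map_frobQ_P12 Fq F3 M h3] at this
    · have := Polynomial.map_dvd σ (hh_dvd_P20 Fq F3 M)
      rwa [map_frobQ_P20 Fq F3 M h3] at this
  have hdvdσ : hh Fq F3 M ∣ (hh Fq F3 M).map σ := by
    have step1 : ((hh Fq F3 M).map σ).map σ ∣ (hh Fq F3 M).map σ := Polynomial.map_dvd σ hσdvd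
    have step2 : (((hh Fq F3 M).map σ).map σ).map σ ∣ ((hh Fq F3 M).map σ).map σ :=
      Polynomial.map_dvd σ step1
    have hid : (((hh Fq F3 M).map σ).map σ).map σ = hh Fq F3 M := by
      rw [map_map, map_map]
      have : (σ.comp σ).comp σ = frobQn Fq F3 3 := by
        show (σ.comp σ).comp σ = σ.comp (σ.comp (σ.comp (RingHom.id F3)))
        rw [RingHom.comp_id]
        ext x
        rfl
      rw [this, frobQn3_id Fq F3 h3, map_id]
    rw [hid] at step2
    exact dvd_trans step2 step1
  exact eq_of_monic_of_associated hmonσ hmon (associated_of_dvd_dvd hσdvd hdvdσ)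

def r0 : F3[X] := P12 Fq F3 M /ₘ hh Fq F3 M
def r1 : F3[X] := P20 Fq F3 M /ₘ hh Fq F3 M
def r2 : F3[X] := P01 Fq F3 M /ₘ hh Fq F3 M
def rz : F3[X] := fe Fq F3 M 0 * r0 Fq F3 M

lemma hh_mul_r0 (hM : IsUnit M.det) : hh Fq F3 M * r0 Fq F3 M = P12 Fq F3 M := by
  have h0 : P12 Fq F3 M %ₘ hh Fq F3 M = 0 :=
    (Polynomial.modByMonic_eq_zero_iff_dvd (hh_monic Fq F3 M hM)).mpr (hh_dvd_P12 Fq F3 M)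
  have := Polynomial.modByMonic_add_div (P12 Fq F3 M) (hh Fq F3 M)
  rw [h0, zero_add] at this
  exact this

lemma hh_mul_r1 (hM : IsUnit M.det) : hh Fq F3 M * r1 Fq F3 M = P20 Fq F3 M := by
  have h0 : P20 Fq F3 M %ₘ hh Fq F3 M = 0 :=
    (Polynomial.modByMonic_eq_zero_iff_dvd (hh_monic Fq F3 M hM)).mpr (hh_dvd_P20 Fq F3 M)
  have := Polynomial.modByMonic_add_div (P20 Fq F3 M) (hh Fq F3 M)
  rw [h0, zero_add] at this
  exact this

lemma hh_mul_r2 (hM : IsUnit M.det) : hh Fq F3 M * r2 Fq F3 M = P01 Fq F3 M := by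
  have h0 : P01 Fq F3 M %ₘ hh Fq F3 M = 0 :=
    (Polynomial.modByMonic_eq_zero_iff_dvd (hh_monic Fq F3 M hM)).mpr (hh_dvd_P01 Fq F3 M)
  have := Polynomial.modByMonic_add_div (P01 Fq F3 M) (hh Fq F3 M)
  rw [h0, zero_add] at this
  exact this

lemma r0_ne_zero (hM : IsUnit M.det) : r0 Fq F3 M ≠ 0 := by
  intro h0
  apply P12_ne_zero Fq F3 M hM
  rw [← hh_mul_r0 Fq F3 M hM, h0, mul_zero]

lemma r1_ne_zero (hM : IsUnit M.det) : r1 Fq F3 M ≠ 0 := by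
  intro h0
  apply P20_ne_zero Fq F3 M hM
  rw [← hh_mul_r1 Fq F3 M hM, h0, mul_zero]

lemma r2_ne_zero (hM : IsUnit M.det) : r2 Fq F3 M ≠ 0 := by
  intro h0
  apply P01_ne_zero Fq F3 M hM
  rw [← hh_mul_r2 Fq F3 M hM, h0, mul_zero]

lemma map_frobQ_r0 (h3 : Fintype.card F3 = Fintype.card Fq ^ 3) (hM : IsUnit M.det) :
    (r0 Fq F3 M).map (frobQ Fq F3) = r1 Fq F3 M := by
  apply mul_left_cancel₀ (hh_ne_zero Fq F3 M hM)
  rw [hh_mul_r1 Fq F3 M hM]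
  calc hh Fq F3 M * (r0 Fq F3 M).map (frobQ Fq F3)
      = (hh Fq F3 M).map (frobQ Fq F3) * (r0 Fq F3 M).map (frobQ Fq F3) := by
        rw [hh_map Fq F3 M h3 hM]
    _ = (hh Fq F3 M * r0 Fq F3 M).map (frobQ Fq F3) := by rw [Polynomial.map_mul]
    _ = (P12 Fq F3 M).map (frobQ Fq F3) := by rw [hh_mul_r0 Fq F3 M hM]
    _ = P20 Fq F3 M := map_frobQ_P12 Fq F3 M h3

lemma map_frobQ_r1 (h3 : Fintype.card F3 = Fintype.card Fq ^ 3) (hM : IsUnit M.det) :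
    (r1 Fq F3 M).map (frobQ Fq F3) = r2 Fq F3 M := by
  apply mul_left_cancel₀ (hh_ne_zero Fq F3 M hM)
  rw [hh_mul_r2 Fq F3 M hM]
  calc hh Fq F3 M * (r1 Fq F3 M).map (frobQ Fq F3)
      = (hh Fq F3 M).map (frobQ Fq F3) * (r1 Fq F3 M).map (frobQ Fq F3) := by
        rw [hh_map Fq F3 M h3 hM]
    _ = (hh Fq F3 M * r1 Fq F3 M).map (frobQ Fq F3) := by rw [Polynomial.map_mul]
    _ = (P20 Fq F3 M).map (frobQ Fq F3) := by rw [hh_mul_r1 Fq F3 M hM]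
    _ = P01 Fq F3 M := map_frobQ_P20 Fq F3 M h3

lemma rz_map (h3 : Fintype.card F3 = Fintype.card Fq ^ 3) (hM : IsUnit M.det) :
    (rz Fq F3 M).map (frobQ Fq F3) = rz Fq F3 M := by
  rw [rz, Polynomial.map_mul, fe_map_frobQ, map_frobQ_r0 Fq F3 M h3 hM]
  apply mul_left_cancel₀ (hh_ne_zero Fq F3 M hM)
  calc hh Fq F3 M * (fe Fq F3 M 1 * r1 Fq F3 M)
      = fe Fq F3 M 1 * (hh Fq F3 M * r1 Fq F3 M) := by ring
    _ = fe Fq F3 M 1 * P20 Fq F3 M := by rw [hh_mul_r1 Fq F3 M hM]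
    _ = fe Fq F3 M 0 * P12 Fq F3 M := by rw [P20, P12]; ring
    _ = fe Fq F3 M 0 * (hh Fq F3 M * r0 Fq F3 M) := by rw [hh_mul_r0 Fq F3 M hM]
    _ = hh Fq F3 M * (fe Fq F3 M 0 * r0 Fq F3 M) := by ring

lemma bezout_r (hM : IsUnit M.det) :
    ∃ a b c : F3[X], a * r0 Fq F3 M + b * r1 Fq F3 M + c * r2 Fq F3 M = 1 := by
  set A := P12 Fq F3 M
  set B := P20 Fq F3 M
  set Cc := P01 Fq F3 M
  have h1 := EuclideanDomain.gcd_eq_gcd_ab A (EuclideanDomain.gcd B Cc)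
  have h2 := EuclideanDomain.gcd_eq_gcd_ab B Cc
  have hgg : gg Fq F3 M = A * EuclideanDomain.gcdA A (EuclideanDomain.gcd B Cc) +
      (B * EuclideanDomain.gcdA B Cc + Cc * EuclideanDomain.gcdB B Cc) *
        EuclideanDomain.gcdB A (EuclideanDomain.gcd B Cc) := by
    rw [gg, h1, ← h2]
  have hlc : (gg Fq F3 M).leadingCoeff ≠ 0 := leadingCoeff_ne_zero.mpr (gg_ne_zero Fq F3 M hM)
  refine ⟨C (gg Fq F3 M).leadingCoeff⁻¹ * EuclideanDomain.gcdA A (EuclideanDomain.gcd B Cc),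
    C (gg Fq F3 M).leadingCoeff⁻¹ * EuclideanDomain.gcdA B Cc *
      EuclideanDomain.gcdB A (EuclideanDomain.gcd B Cc),
    C (gg Fq F3 M).leadingCoeff⁻¹ * EuclideanDomain.gcdB B Cc *
      EuclideanDomain.gcdB A (EuclideanDomain.gcd B Cc), ?_⟩
  apply mul_left_cancel₀ (hh_ne_zero Fq F3 M hM)
  rw [mul_one]
  have expand : hh Fq F3 M * (C (gg Fq F3 M).leadingCoeff⁻¹ *
        EuclideanDomain.gcdA A (EuclideanDomain.gcd B Cc) * r0 Fq F3 M +
      C (gg Fq F3 M).leadingCoeff⁻¹ * EuclideanDomain.gcdA B Cc *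
        EuclideanDomain.gcdB A (EuclideanDomain.gcd B Cc) * r1 Fq F3 M +
      C (gg Fq F3 M).leadingCoeff⁻¹ * EuclideanDomain.gcdB B Cc *
        EuclideanDomain.gcdB A (EuclideanDomain.gcd B Cc) * r2 Fq F3 M) =
      C (gg Fq F3 M).leadingCoeff⁻¹ *
        ((hh Fq F3 M * r0 Fq F3 M) * EuclideanDomain.gcdA A (EuclideanDomain.gcd B Cc) +
         ((hh Fq F3 M * r1 Fq F3 M) * EuclideanDomain.gcdA B Cc +
          (hh Fq F3 M * r2 Fq F3 M) * EuclideanDomain.gcdB B Cc) *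
           EuclideanDomain.gcdB A (EuclideanDomain.gcd B Cc)) := by ring
  rw [expand, hh_mul_r0 Fq F3 M hM, hh_mul_r1 Fq F3 M hM, hh_mul_r2 Fq F3 M hM]
  rw [← hgg]
  rw [hh, mul_comm]

end Geom2

section Geom3
variable (Fq F3 : Type*) [Field Fq] [Fintype Fq] [Field F3] [Fintype F3] [Algebra Fq F3]
variable (M : Matrix (Fin 3) (Fin 3) F3)

lemma natDegree_P12 (hM : IsUnit M.det) :
    (P12 Fq F3 M).natDegree = 2 * (upoly F3 M 2).natDegree := by
  rw [P12, natDegree_mul (fe_ne_zero Fq F3 M hM 1) (fe_ne_zero Fq F3 M hM 2),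
    fe_natDegree, fe_natDegree, two_mul]

lemma hh_add_r0_deg (hM : IsUnit M.det) :
    (hh Fq F3 M).natDegree + (r0 Fq F3 M).natDegree = 2 * (upoly F3 M 2).natDegree := by
  rw [← natDegree_P12 Fq F3 M hM, ← hh_mul_r0 Fq F3 M hM,
    natDegree_mul (hh_ne_zero Fq F3 M hM) (r0_ne_zero Fq F3 M hM)]

lemma hh_add_r1_deg (hM : IsUnit M.det) :
    (hh Fq F3 M).natDegree + (r1 Fq F3 M).natDegree = 2 * (upoly F3 M 2).natDegree := by
  have : (P20 Fq F3 M).natDegree = 2 * (upoly F3 M 2).natDegree := by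
    rw [P20, natDegree_mul (fe_ne_zero Fq F3 M hM 2) (fe_ne_zero Fq F3 M hM 0),
      fe_natDegree, fe_natDegree, two_mul]
  rw [← this, ← hh_mul_r1 Fq F3 M hM,
    natDegree_mul (hh_ne_zero Fq F3 M hM) (r1_ne_zero Fq F3 M hM)]

lemma hh_add_r2_deg (hM : IsUnit M.det) :
    (hh Fq F3 M).natDegree + (r2 Fq F3 M).natDegree = 2 * (upoly F3 M 2).natDegree := by
  have : (P01 Fq F3 M).natDegree = 2 * (upoly F3 M 2).natDegree := by
    rw [P01, natDegree_mul (fe_ne_zero Fq F3 M hM 0) (fe_ne_zero Fq F3 M hM 1),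
      fe_natDegree, fe_natDegree, two_mul]
  rw [← this, ← hh_mul_r2 Fq F3 M hM,
    natDegree_mul (hh_ne_zero Fq F3 M hM) (r2_ne_zero Fq F3 M hM)]

lemma natDegree_rz (hM : IsUnit M.det) :
    (rz Fq F3 M).natDegree = (upoly F3 M 2).natDegree + (r0 Fq F3 M).natDegree := by
  rw [rz, natDegree_mul (fe_ne_zero Fq F3 M hM 0) (r0_ne_zero Fq F3 M hM), fe_natDegree]

lemma dh_ne_one (h3 : Fintype.card F3 = Fintype.card Fq ^ 3) (hM : IsUnit M.det) :
    (hh Fq F3 M).natDegree ≠ 1 := by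
  intro hdeg
  have hmon := hh_monic Fq F3 M hM
  have heq0 : hh Fq F3 M = C ((hh Fq F3 M).coeff 1) * X + C ((hh Fq F3 M).coeff 0) :=
    eq_X_add_C_of_natDegree_le_one (le_of_eq hdeg)
  have hc1 : (hh Fq F3 M).coeff 1 = 1 := by
    have := hmon.coeff_natDegree
    rwa [hdeg] at this
  set γ : F3 := -((hh Fq F3 M).coeff 0) with hγ
  have heq : hh Fq F3 M = X - C γ := by
    rw [heq0, hc1, hγ, map_neg, C_1, one_mul, sub_neg_eq_add]
  have hγfix : frobQ Fq F3 γ = γ := by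
    have hcoe : ((hh Fq F3 M).map (frobQ Fq F3)).coeff 0 = (hh Fq F3 M).coeff 0 := by
      rw [hh_map Fq F3 M h3 hM]
    rw [coeff_map] at hcoe
    rw [hγ, map_neg, hcoe]
  have hroot : ∀ e : ℕ, (fe Fq F3 M e).eval γ = 0 := by
    have hP12root : (P12 Fq F3 M).eval γ = 0 := by
      have hdvd : (X - C γ) ∣ P12 Fq F3 M := heq ▸ hh_dvd_P12 Fq F3 M
      have := Polynomial.dvd_iff_isRoot.mp hdvd
      exact this
    have hprod : (fe Fq F3 M 1).eval γ * (fe Fq F3 M 2).eval γ = 0 := by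
      rw [← eval_mul, ← P12]; exact hP12root
    have hf0 : (upoly F3 M 2).eval γ = 0 := by
      rcases mul_eq_zero.mp hprod with h | h
      · rw [fe_eval_fix Fq F3 M 1 γ hγfix] at h
        have := (map_eq_zero_iff _ (RingHom.injective _)).mp h
        exact this
      · rw [fe_eval_fix Fq F3 M 2 γ hγfix] at h
        have := (map_eq_zero_iff _ (RingHom.injective _)).mp h
        exact this
    intro e
    rw [fe_eval_fix Fq F3 M e γ hγfix, hf0, map_zero]
  have hdvd2 : (X - C γ) * (X - C γ) ∣ hh Fq F3 M := by
    apply dvd_hh_of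
    · exact mul_dvd_mul (Polynomial.dvd_iff_isRoot.mpr (hroot 1))
        (Polynomial.dvd_iff_isRoot.mpr (hroot 2))
    · exact mul_dvd_mul (Polynomial.dvd_iff_isRoot.mpr (hroot 2))
        (Polynomial.dvd_iff_isRoot.mpr (hroot 0))
    · exact mul_dvd_mul (Polynomial.dvd_iff_isRoot.mpr (hroot 0))
        (Polynomial.dvd_iff_isRoot.mpr (hroot 1))
  have hdeg2 : ((X - C γ) * (X - C γ) : F3[X]).natDegree = 2 := by
    rw [natDegree_mul (X_sub_C_ne_zero γ) (X_sub_C_ne_zero γ), natDegree_X_sub_C]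
  have := natDegree_le_of_dvd hdvd2 (hh_ne_zero Fq F3 M hM)
  omega

lemma exists_rz0 (h3 : Fintype.card F3 = Fintype.card Fq ^ 3) (hM : IsUnit M.det) :
    ∃ rz0 : Fq[X], rz0.map (algebraMap Fq F3) = rz Fq F3 M := by
  have hmem : rz Fq F3 M ∈ Polynomial.lifts (algebraMap Fq F3) := by
    rw [lifts_iff_coeff_lifts]
    intro n
    have hfix : ((rz Fq F3 M).coeff n) ^ Fintype.card Fq = (rz Fq F3 M).coeff n := by
      have : ((rz Fq F3 M).map (frobQ Fq F3)).coeff n = (rz Fq F3 M).coeff n := by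
        rw [rz_map Fq F3 M h3 hM]
      rwa [coeff_map, frobQ_apply] at this
    obtain ⟨a, ha⟩ := fixed_mem_range Fq F3 hfix
    exact ⟨a, ha⟩
  obtain ⟨rz0, hrz0⟩ := (Polynomial.mem_lifts _).mp hmem
  exact ⟨rz0, hrz0⟩

end Geom3

section GeomF6
variable (Fq F3 F6 : Type*) [Field Fq] [Field F3] [Field F6]
  [Fintype Fq] [Fintype F3] [Fintype F6]
  [Algebra Fq F3] [Algebra F3 F6] [Algebra Fq F6] [IsScalarTower Fq F3 F6]

/-- The three embeddings `F3 →+* F6`. -/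
def tau (e : ℕ) : F3 →+* F6 := (frobQn Fq F6 e).comp (algebraMap F3 F6)

lemma tau_apply (e : ℕ) (x : F3) :
    tau Fq F3 F6 e x = (algebraMap F3 F6 x) ^ Fintype.card Fq ^ e := by
  rw [tau, RingHom.coe_comp, Function.comp_apply, frobQn_apply]

lemma tau_zero : tau Fq F3 F6 0 = (algebraMap F3 F6 : F3 →+* F6) := by
  ext x
  rw [tau_apply, pow_zero, pow_one]

lemma tau_comp_frobQ (e : ℕ) :
    (tau Fq F3 F6 e).comp (frobQ Fq F3) = tau Fq F3 F6 (e + 1) := by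
  ext x
  rw [RingHom.coe_comp, Function.comp_apply, tau_apply, tau_apply, frobQ_apply,
    map_pow, ← pow_mul, ← pow_succ']

lemma tau_comp_frobQn (e b : ℕ) :
    (tau Fq F3 F6 e).comp (frobQn Fq F3 b) = tau Fq F3 F6 (e + b) := by
  induction b with
  | zero => rfl
  | succ b ih =>
    have : frobQn Fq F3 (b + 1) = (frobQn Fq F3 b).comp (frobQ Fq F3) :=
      (frobQn_comp_frobQ Fq F3 b).symm
    rw [this, ← RingHom.comp_assoc, ih, tau_comp_frobQ, show e + b + 1 = e + (b+1) from rfl]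

lemma tau_fix_Fq (e : ℕ) (a : Fq) :
    tau Fq F3 F6 e (algebraMap Fq F3 a) = algebraMap Fq F6 a := by
  rw [tau, RingHom.coe_comp, Function.comp_apply, ← IsScalarTower.algebraMap_apply,
    frobQn_fix]

lemma tau_three (h3 : Fintype.card F3 = Fintype.card Fq ^ 3)
    (h6 : Fintype.card F6 = Fintype.card Fq ^ 6) :
    tau Fq F3 F6 3 = tau Fq F3 F6 0 := by
  ext x
  rw [tau_apply, tau_apply, pow_zero, pow_one, ← map_pow, ← h3, FiniteField.pow_card]

variable (M : Matrix (Fin 3) (Fin 3) F3)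

/-- The conjugates in `F6[X]` of `f`. -/
def FF (e : ℕ) : F6[X] := (upoly F3 M 2).map (tau Fq F3 F6 e)

/-- The conjugates in `F6[X]` of `r0`. -/
def Qe (e : ℕ) : F6[X] := (r0 Fq F3 M).map (tau Fq F3 F6 e)

lemma map_tau_fe (e b : ℕ) :
    (fe Fq F3 M b).map (tau Fq F3 F6 e) = FF Fq F3 F6 M (e + b) := by
  rw [fe, map_map, tau_comp_frobQn, FF]

lemma FF_three (h3 : Fintype.card F3 = Fintype.card Fq ^ 3)
    (h6 : Fintype.card F6 = Fintype.card Fq ^ 6) :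
    FF Fq F3 F6 M 3 = FF Fq F3 F6 M 0 := by
  rw [FF, FF, tau_three Fq F3 F6 h3 h6]

lemma map_tau_succ (e : ℕ) (p : F3[X]) :
    p.map (tau Fq F3 F6 (e + 1)) = (p.map (frobQ Fq F3)).map (tau Fq F3 F6 e) := by
  rw [map_map, tau_comp_frobQ]

lemma Qe_one (h3 : Fintype.card F3 = Fintype.card Fq ^ 3) (hM : IsUnit M.det) :
    Qe Fq F3 F6 M 1 = (r1 Fq F3 M).map (tau Fq F3 F6 0) := by
  rw [Qe, map_tau_succ, map_frobQ_r0 Fq F3 M h3 hM]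

lemma Qe_two (h3 : Fintype.card F3 = Fintype.card Fq ^ 3) (hM : IsUnit M.det) :
    Qe Fq F3 F6 M 2 = (r2 Fq F3 M).map (tau Fq F3 F6 0) := by
  rw [Qe, map_tau_succ, map_frobQ_r0 Fq F3 M h3 hM, map_tau_succ,
    map_frobQ_r1 Fq F3 M h3 hM]

lemma Qe_natDegree (e : ℕ) : (Qe Fq F3 F6 M e).natDegree = (r0 Fq F3 M).natDegree := by
  rw [Qe, natDegree_map]

lemma Qe_ne_zero (hM : IsUnit M.det) (e : ℕ) : Qe Fq F3 F6 M e ≠ 0 := by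
  rw [Qe]
  intro h0
  exact r0_ne_zero Fq F3 M hM ((Polynomial.map_eq_zero _).mp h0)

lemma bezout_Qe (h3 : Fintype.card F3 = Fintype.card Fq ^ 3) (hM : IsUnit M.det) :
    ∃ a b c : F6[X], a * Qe Fq F3 F6 M 0 + b * Qe Fq F3 F6 M 1 + c * Qe Fq F3 F6 M 2 = 1 := by
  obtain ⟨a, b, c, habc⟩ := bezout_r Fq F3 M hM
  refine ⟨a.map (tau Fq F3 F6 0), b.map (tau Fq F3 F6 0), c.map (tau Fq F3 F6 0), ?_⟩
  rw [Qe_one Fq F3 F6 M h3 hM, Qe_two Fq F3 F6 M h3 hM, Qe]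
  have := congrArg (Polynomial.map (tau Fq F3 F6 0)) habc
  rw [Polynomial.map_add, Polynomial.map_add, Polynomial.map_mul, Polynomial.map_mul,
    Polynomial.map_mul, Polynomial.map_one] at this
  exact this

/-- The two main numerator polynomials. -/
def Vx : F3[X] := upoly F3 M 0 * r0 Fq F3 M
def Vy : F3[X] := upoly F3 M 1 * r0 Fq F3 M

lemma map_tau_Vx (e : ℕ) : (Vx Fq F3 M).map (tau Fq F3 F6 e) =
    (upoly F3 M 0).map (tau Fq F3 F6 e) * Qe Fq F3 F6 M e := by
  rw [Vx, Polynomial.map_mul, Qe]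

lemma map_tau_Vy (e : ℕ) : (Vy Fq F3 M).map (tau Fq F3 F6 e) =
    (upoly F3 M 1).map (tau Fq F3 F6 e) * Qe Fq F3 F6 M e := by
  rw [Vy, Polynomial.map_mul, Qe]

lemma map_tau_rz (h3 : Fintype.card F3 = Fintype.card Fq ^ 3) (hM : IsUnit M.det) (e : ℕ) :
    (rz Fq F3 M).map (tau Fq F3 F6 e) = (rz Fq F3 M).map (tau Fq F3 F6 0) := by
  induction e with
  | zero => rfl
  | succ e ih => rw [map_tau_succ, rz_map Fq F3 M h3 hM, ih]

lemma map_tau_rz_eq (h3 : Fintype.card F3 = Fintype.card Fq ^ 3) (hM : IsUnit M.det)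
    {rz0 : Fq[X]} (hrz0 : rz0.map (algebraMap Fq F3) = rz Fq F3 M) (e : ℕ) :
    (rz Fq F3 M).map (tau Fq F3 F6 e) = rz0.map (algebraMap Fq F6) := by
  rw [map_tau_rz Fq F3 F6 M h3 hM e, ← hrz0, map_map, tau_zero]
  congr 1
  ext a
  rw [RingHom.coe_comp, Function.comp_apply, ← IsScalarTower.algebraMap_apply]

lemma map_tau_rz_row (h3 : Fintype.card F3 = Fintype.card Fq ^ 3) (hM : IsUnit M.det) (e : ℕ) :
    (rz Fq F3 M).map (tau Fq F3 F6 e) =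
      (upoly F3 M 2).map (tau Fq F3 F6 e) * Qe Fq F3 F6 M e := by
  rw [rz, Polynomial.map_mul, fe_zero, Qe]

end GeomF6

lemma isCoprime_map_hom {K L : Type*} [Field K] [Field L] (φ : K →+* L) {p q : K[X]}
    (h : IsCoprime p q) : IsCoprime (p.map φ) (q.map φ) := by
  obtain ⟨a, b, hab⟩ := h
  refine ⟨a.map φ, b.map φ, ?_⟩
  have := congrArg (Polynomial.map φ) hab
  rwa [Polynomial.map_add, Polynomial.map_mul, Polynomial.map_mul, Polynomial.map_one] at this

section RepAll
variable (Fq F3 F6 : Type*) [Field Fq] [Field F3] [Field F6]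
  [Fintype Fq] [Fintype F3] [Fintype F6]
  [Algebra Fq F3] [Algebra F3 F6] [Algebra Fq F6] [IsScalarTower Fq F3 F6]
variable (M : Matrix (Fin 3) (Fin 3) F3)

lemma fe01_coprime (hM : IsUnit M.det) (hdh : (hh Fq F3 M).natDegree = 0) :
    IsCoprime (fe Fq F3 M 0) (fe Fq F3 M 1) := by
  apply isCoprime_of_isUnit_gcd
  set d := EuclideanDomain.gcd (fe Fq F3 M 0) (fe Fq F3 M 1) with hd
  have hd0 : d ∣ fe Fq F3 M 0 := EuclideanDomain.gcd_dvd_left _ _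
  have hd1 : d ∣ fe Fq F3 M 1 := EuclideanDomain.gcd_dvd_right _ _
  have hdvdh : d ∣ hh Fq F3 M := by
    apply dvd_hh_of
    · rw [P12]; exact dvd_mul_of_dvd_left hd1 _
    · rw [P20]; exact dvd_mul_of_dvd_right hd0 _
    · rw [P01]; exact dvd_mul_of_dvd_left hd0 _
  have hdne : d ≠ 0 := by
    intro h0
    rw [hd] at h0
    exact fe_ne_zero Fq F3 M hM 0 (EuclideanDomain.gcd_eq_zero_iff.mp h0).1
  have hdd : d.natDegree = 0 := by
    have := natDegree_le_of_dvd hdvdh (hh_ne_zero Fq F3 M hM)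
    omega
  exact isUnit_of_natDegree_zero hdne hdd

lemma FF_natDegree (e : ℕ) :
    (FF Fq F3 F6 M e).natDegree = (upoly F3 M 2).natDegree := by
  rw [FF, natDegree_map]

lemma FF_coprime (h3 : Fintype.card F3 = Fintype.card Fq ^ 3)
    (h6 : Fintype.card F6 = Fintype.card Fq ^ 6) (hM : IsUnit M.det)
    (hdh : (hh Fq F3 M).natDegree = 0) :
    IsCoprime (FF Fq F3 F6 M 0) (FF Fq F3 F6 M 1) ∧
    IsCoprime (FF Fq F3 F6 M 1) (FF Fq F3 F6 M 2) ∧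
    IsCoprime (FF Fq F3 F6 M 0) (FF Fq F3 F6 M 2) := by
  have hbase := fe01_coprime Fq F3 M hM hdh
  have h0 := isCoprime_map_hom (tau Fq F3 F6 0) hbase
  have h1 := isCoprime_map_hom (tau Fq F3 F6 1) hbase
  have h2 := isCoprime_map_hom (tau Fq F3 F6 2) hbase
  rw [map_tau_fe, map_tau_fe] at h0 h1 h2
  norm_num at h0 h1 h2
  rw [FF_three Fq F3 F6 M h3 h6] at h2
  exact ⟨h0, h1, h2.symm⟩

lemma hh_eq_one (hM : IsUnit M.det) (hdh : (hh Fq F3 M).natDegree = 0) :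
    hh Fq F3 M = 1 := (hh_monic Fq F3 M hM).natDegree_eq_zero.mp hdh

lemma Qe_prod0 (hM : IsUnit M.det) (hdh : (hh Fq F3 M).natDegree = 0) :
    Qe Fq F3 F6 M 0 = FF Fq F3 F6 M 1 * FF Fq F3 F6 M 2 := by
  have hr0 : r0 Fq F3 M = fe Fq F3 M 1 * fe Fq F3 M 2 := by
    have := hh_mul_r0 Fq F3 M hM
    rwa [hh_eq_one Fq F3 M hM hdh, one_mul, P12] at this
  rw [Qe, hr0, Polynomial.map_mul, map_tau_fe, map_tau_fe]

lemma Qe_prod1 (h3 : Fintype.card F3 = Fintype.card Fq ^ 3) (hM : IsUnit M.det)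
    (hdh : (hh Fq F3 M).natDegree = 0) :
    Qe Fq F3 F6 M 1 = FF Fq F3 F6 M 2 * FF Fq F3 F6 M 0 := by
  have hr1 : r1 Fq F3 M = fe Fq F3 M 2 * fe Fq F3 M 0 := by
    have := hh_mul_r1 Fq F3 M hM
    rwa [hh_eq_one Fq F3 M hM hdh, one_mul, P20] at this
  rw [Qe_one Fq F3 F6 M h3 hM, hr1, Polynomial.map_mul, map_tau_fe, map_tau_fe]

lemma Qe_prod2 (h3 : Fintype.card F3 = Fintype.card Fq ^ 3) (hM : IsUnit M.det)
    (hdh : (hh Fq F3 M).natDegree = 0) :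
    Qe Fq F3 F6 M 2 = FF Fq F3 F6 M 0 * FF Fq F3 F6 M 1 := by
  have hr2 : r2 Fq F3 M = fe Fq F3 M 0 * fe Fq F3 M 1 := by
    have := hh_mul_r2 Fq F3 M hM
    rwa [hh_eq_one Fq F3 M hM hdh, one_mul, P01] at this
  rw [Qe_two Fq F3 F6 M h3 hM, hr2, Polynomial.map_mul, map_tau_fe, map_tau_fe]

lemma rep_all (h3 : Fintype.card F3 = Fintype.card Fq ^ 3)
    (h6 : Fintype.card F6 = Fintype.card Fq ^ 6) (hM : IsUnit M.det)
    (p : F6[X]) (hp : p.natDegree ≤ (r0 Fq F3 M).natDegree + 2) :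
    RepBound (Qe Fq F3 F6 M 0) (Qe Fq F3 F6 M 1) (Qe Fq F3 F6 M 2) p := by
  have hdf : (upoly F3 M 2).natDegree ≤ 2 := upoly_natDegree F3 M 2
  have hsum := hh_add_r0_deg Fq F3 M hM
  have hne1 := dh_ne_one Fq F3 M h3 hM
  have hm : (r0 Fq F3 M).natDegree = 0 ∨ (r0 Fq F3 M).natDegree = 1 ∨
      (r0 Fq F3 M).natDegree = 2 ∨
      ((r0 Fq F3 M).natDegree = 4 ∧ (hh Fq F3 M).natDegree = 0 ∧
        (upoly F3 M 2).natDegree = 2) := by omega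
  rcases hm with hm | hm | hm | ⟨hm, hdh0, hdf2⟩
  · exact rep_m0 (Qe_ne_zero Fq F3 F6 M hM 0) (by rw [Qe_natDegree, hm]) p
      (by omega)
  · exact rep_m1 (by rw [Qe_natDegree, hm]) (by rw [Qe_natDegree, hm])
      (by rw [Qe_natDegree, hm]) (bezout_Qe Fq F3 F6 M h3 hM) p (by omega)
  · exact rep_m2 (by rw [Qe_natDegree, hm]) (by rw [Qe_natDegree, hm])
      (by rw [Qe_natDegree, hm]) (bezout_Qe Fq F3 F6 M h3 hM) p (by omega)
  · obtain ⟨c01, c12, c02⟩ := FF_coprime Fq F3 F6 M h3 h6 hM hdh0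
    have hFd : ∀ e : ℕ, (FF Fq F3 F6 M e).natDegree = 2 := by
      intro e; rw [FF_natDegree, hdf2]
    have hrep := rep_m4 (hFd 0) (hFd 1) (hFd 2) c01 c02 c12 p (by omega)
    rwa [← Qe_prod0 Fq F3 F6 M hM hdh0, ← Qe_prod1 Fq F3 F6 M h3 hM hdh0,
      ← Qe_prod2 Fq F3 F6 M h3 hM hdh0] at hrep

end RepAll

section Indep
variable (Fq F3 F6 : Type*) [Field Fq] [Field F3] [Field F6]
  [Fintype Fq] [Fintype F3] [Fintype F6]
  [Algebra Fq F3] [Algebra F3 F6] [Algebra Fq F6] [IsScalarTower Fq F3 F6]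
variable (M : Matrix (Fin 3) (Fin 3) F3)

lemma map_tau_upoly (e : ℕ) (j : Fin 3) :
    (upoly F3 M j).map (tau Fq F3 F6 e) =
      ∑ i : Fin 3, C (((tau Fq F3 F6 e).mapMatrix M) j i) * (X : F6[X]) ^ (i : ℕ) := by
  rw [upoly, Polynomial.map_sum]
  refine Finset.sum_congr rfl fun i _ => ?_
  rw [Polynomial.map_mul, map_C, Polynomial.map_pow, map_X, RingHom.mapMatrix_apply,
    Matrix.map_apply]

lemma tau_matrix_unit (hM : IsUnit M.det) (e : ℕ) :
    IsUnit ((tau Fq F3 F6 e).mapMatrix M).det := by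
  rw [← RingHom.map_det]
  rw [isUnit_iff_ne_zero]
  have : M.det ≠ 0 := hM.ne_zero
  exact fun h0 => this ((tau Fq F3 F6 e).injective (by rw [h0, map_zero]))

lemma v_indep (h3 : Fintype.card F3 = Fintype.card Fq ^ 3)
    (h6 : Fintype.card F6 = Fintype.card Fq ^ 6) (hM : IsUnit M.det)
    {rz0 : Fq[X]} (hrz0 : rz0.map (algebraMap Fq F3) = rz Fq F3 M)
    {k : ℕ} (hk : k ≤ (r0 Fq F3 M).natDegree + 2)
    (lam : Fin (k + 1) → Fq)
    (hx : ∑ i : Fin (k + 1), algebraMap Fq F3 (lam i) * (Vx Fq F3 M).coeff i = 0)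
    (hy : ∑ i : Fin (k + 1), algebraMap Fq F3 (lam i) * (Vy Fq F3 M).coeff i = 0)
    (hz : ∑ i : Fin (k + 1), lam i * rz0.coeff i = 0) :
    ∀ i, lam i = 0 := by
  set T : F6[X] →ₗ[F6] F6 :=
    ∑ i : Fin (k + 1), algebraMap Fq F6 (lam i) • Polynomial.lcoeff F6 (i : ℕ) with hT
  have Tapply : ∀ pp : F6[X],
      T pp = ∑ i : Fin (k + 1), algebraMap Fq F6 (lam i) * pp.coeff (i : ℕ) := by
    intro pp
    rw [hT, LinearMap.sum_apply]
    refine Finset.sum_congr rfl fun i _ => ?_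
    rw [LinearMap.smul_apply, lcoeff_apply, smul_eq_mul]
  -- The rows are annihilated by T.
  have hrow3 : ∀ (e : ℕ) (p : F3[X]),
      (∑ i : Fin (k + 1), algebraMap Fq F3 (lam i) * p.coeff (i : ℕ) = 0) →
      T (p.map (tau Fq F3 F6 e)) = 0 := by
    intro e p hp
    rw [Tapply]
    have : ∀ i : Fin (k + 1), algebraMap Fq F6 (lam i) * (p.map (tau Fq F3 F6 e)).coeff (i : ℕ)
        = tau Fq F3 F6 e (algebraMap Fq F3 (lam i) * p.coeff (i : ℕ)) := by
      intro i
      rw [coeff_map, map_mul, tau_fix_Fq]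
    rw [Finset.sum_congr rfl fun i _ => this i, ← map_sum, hp, map_zero]
  have hrowz : T (rz0.map (algebraMap Fq F6)) = 0 := by
    rw [Tapply]
    have : ∀ i : Fin (k + 1), algebraMap Fq F6 (lam i) * (rz0.map (algebraMap Fq F6)).coeff (i : ℕ)
        = algebraMap Fq F6 (lam i * rz0.coeff (i : ℕ)) := by
      intro i
      rw [coeff_map, map_mul]
    rw [Finset.sum_congr rfl fun i _ => this i, ← map_sum, hz, map_zero]
  -- monomial times Qe is annihilated
  have hUrowT : ∀ (e : ℕ) (j : Fin 3),
      T ((upoly F3 M j).map (tau Fq F3 F6 e) * Qe Fq F3 F6 M e) = 0 := by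
    intro e j
    match j with
    | 0 => rw [← map_tau_Vx]; exact hrow3 e (Vx Fq F3 M) hx
    | 1 => rw [← map_tau_Vy]; exact hrow3 e (Vy Fq F3 M) hy
    | 2 =>
      rw [← map_tau_rz_row Fq F3 F6 M h3 hM e, map_tau_rz_eq Fq F3 F6 M h3 hM hrz0 e]
      exact hrowz
  have hTQ : ∀ (e : ℕ) (a : Fin 3), T ((X : F6[X]) ^ (a : ℕ) * Qe Fq F3 F6 M e) = 0 := by
    intro e a
    have hXa := rowspan_monomial ((tau Fq F3 F6 e).mapMatrix M) (tau_matrix_unit Fq F3 F6 M hM e) a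
    rw [hXa, Finset.sum_mul, map_sum]
    apply Finset.sum_eq_zero
    intro j _
    rw [mul_assoc, ← smul_eq_C_mul, map_smul]
    have hUQ : (∑ i : Fin 3, C (((tau Fq F3 F6 e).mapMatrix M) j i) * (X : F6[X]) ^ (i : ℕ))
        * Qe Fq F3 F6 M e = ((upoly F3 M j).map (tau Fq F3 F6 e)) * Qe Fq F3 F6 M e := by
      rw [map_tau_upoly]
    rw [hUQ, hUrowT e j, smul_zero]
  have hTl : ∀ (e : ℕ) (l : F6[X]), l.natDegree ≤ 2 → T (l * Qe Fq F3 F6 M e) = 0 := by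
    intro e l hl
    have hsum : l = ∑ a ∈ Finset.range 3, (monomial a) (l.coeff a) :=
      Polynomial.as_sum_range' l 3 (by omega)
    rw [hsum, Finset.sum_mul, map_sum]
    apply Finset.sum_eq_zero
    intro a ha
    rw [← Polynomial.C_mul_X_pow_eq_monomial, mul_assoc, ← smul_eq_C_mul, map_smul]
    have ha3 : a < 3 := Finset.mem_range.mp ha
    have := hTQ e ⟨a, ha3⟩
    simp only [Fin.val_mk] at this
    rw [this, smul_zero]
  have hTX : ∀ j : ℕ, j ≤ k → T ((X : F6[X]) ^ j) = 0 := by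
    intro j hj
    obtain ⟨l0, l1, l2, hd0, hd1, hd2, hrep⟩ := rep_all Fq F3 F6 M h3 h6 hM ((X : F6[X]) ^ j)
      (by rw [natDegree_X_pow]; omega)
    rw [hrep, map_add, map_add, hTl 0 l0 hd0, hTl 1 l1 hd1, hTl 2 l2 hd2, add_zero, add_zero]
  intro i
  have hTXi := hTX (i : ℕ) (by omega)
  rw [Tapply] at hTXi
  have hcol : ∑ i' : Fin (k + 1), algebraMap Fq F6 (lam i') * ((X : F6[X]) ^ (i : ℕ)).coeff (i' : ℕ)
      = algebraMap Fq F6 (lam i) := by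
    rw [Finset.sum_eq_single i]
    · rw [coeff_X_pow, if_pos rfl, mul_one]
    · intro i' _ hne
      rw [coeff_X_pow, if_neg (fun hc => hne (Fin.ext hc)), mul_zero]
    · intro hmem
      exact absurd (Finset.mem_univ i) hmem
  rw [hcol] at hTXi
  exact (algebraMap Fq F6).injective (by rw [hTXi, map_zero])

end Indep

lemma le_rootMultiplicity_map_fix {K : Type*} [Field K] (ψ : K →+* K) {x : K}
    (hx : ψ x = x) {p : K[X]} (hp : p ≠ 0) :
    rootMultiplicity x p ≤ rootMultiplicity x (p.map ψ) := by
  have hmp : p.map ψ ≠ 0 := fun h0 => hp ((Polynomial.map_eq_zero _).mp h0)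
  rw [le_rootMultiplicity_iff hmp]
  have hdvd := pow_rootMultiplicity_dvd p x
  have := Polynomial.map_dvd ψ hdvd
  rwa [Polynomial.map_pow, Polynomial.map_sub, map_X, map_C, hx] at this

lemma rootMultiplicity_map_fix {K : Type*} [Field K] (φ : K →+* K)
    (hbij : Function.Bijective φ) {x : K} (hx : φ x = x) {p : K[X]} (hp : p ≠ 0) :
    rootMultiplicity x (p.map φ) = rootMultiplicity x p := by
  set e := RingEquiv.ofBijective φ hbij with he
  have hsymm : e.symm x = x := by
    conv_lhs => rw [← hx]
    exact e.symm_apply_apply x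
  refine le_antisymm ?_ (le_rootMultiplicity_map_fix φ hx hp)
  have hmp : p.map φ ≠ 0 := fun h0 => hp ((Polynomial.map_eq_zero _).mp h0)
  have h2 := le_rootMultiplicity_map_fix (e.symm : K ≃+* K).toRingHom hsymm hmp
  have hback : (p.map φ).map (e.symm : K ≃+* K).toRingHom = p := by
    rw [map_map]
    have hcomp : ((e.symm : K ≃+* K).toRingHom).comp φ = RingHom.id K := by
      ext y
      exact e.symm_apply_apply y
    rw [hcomp, map_id]
  rwa [hback] at h2

section GeomEval
variable (Fq F3 : Type*) [Field Fq] [Fintype Fq] [Field F3] [Fintype F3] [Algebra Fq F3]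
variable (M : Matrix (Fin 3) (Fin 3) F3)

lemma frobQn_bijective (e : ℕ) : Function.Bijective (frobQn Fq F3 e) :=
  Finite.injective_iff_bijective.mp (frobQn Fq F3 e).injective

lemma eval_nonroot_facts (hM : IsUnit M.det) {x : F3} (hfx : frobQ Fq F3 x = x)
    (hf : (upoly F3 M 2).eval x ≠ 0) :
    (r0 Fq F3 M).eval x ≠ 0 ∧ (rz Fq F3 M).eval x ≠ 0 := by
  have hP12 : (P12 Fq F3 M).eval x ≠ 0 := by
    rw [P12, eval_mul, fe_eval_fix Fq F3 M 1 x hfx, fe_eval_fix Fq F3 M 2 x hfx]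
    exact mul_ne_zero (fun h0 => hf ((map_eq_zero_iff _ (RingHom.injective _)).mp h0))
      (fun h0 => hf ((map_eq_zero_iff _ (RingHom.injective _)).mp h0))
  have hr0 : (r0 Fq F3 M).eval x ≠ 0 := by
    intro h0
    apply hP12
    rw [← hh_mul_r0 Fq F3 M hM, eval_mul, h0, mul_zero]
  refine ⟨hr0, ?_⟩
  rw [rz, eval_mul, fe_zero]
  exact mul_ne_zero hf hr0

lemma eval_root_facts (hM : IsUnit M.det) {x : F3} (hfx : frobQ Fq F3 x = x)
    (hf : (upoly F3 M 2).eval x = 0) :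
    (r0 Fq F3 M).eval x ≠ 0 ∧ (rz Fq F3 M).eval x = 0 := by
  have hfne : upoly F3 M 2 ≠ 0 := upoly_ne_zero F3 M hM 2
  set t := rootMultiplicity x (upoly F3 M 2) with ht
  have tfe : ∀ e : ℕ, rootMultiplicity x (fe Fq F3 M e) = t := by
    intro e
    rw [fe]
    exact rootMultiplicity_map_fix (frobQn Fq F3 e) (frobQn_bijective Fq F3 e)
      (frobQn_fix_of_fix hfx e) hfne
  have hdvdfe : ∀ e : ℕ, (X - C x) ^ t ∣ fe Fq F3 M e := by
    intro e
    have := pow_rootMultiplicity_dvd (fe Fq F3 M e) x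
    rwa [tfe e] at this
  have hdvd2 : (X - C x) ^ (t + t) ∣ hh Fq F3 M := by
    apply dvd_hh_of
    · rw [pow_add, P12]; exact mul_dvd_mul (hdvdfe 1) (hdvdfe 2)
    · rw [pow_add, P20]; exact mul_dvd_mul (hdvdfe 2) (hdvdfe 0)
    · rw [pow_add, P01]; exact mul_dvd_mul (hdvdfe 0) (hdvdfe 1)
  have hle : t + t ≤ rootMultiplicity x (hh Fq F3 M) :=
    (le_rootMultiplicity_iff (hh_ne_zero Fq F3 M hM)).mpr hdvd2
  have hP12mult : rootMultiplicity x (P12 Fq F3 M) = t + t := by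
    rw [P12, rootMultiplicity_mul (P12_ne_zero Fq F3 M hM), tfe 1, tfe 2]
  have hsplit : rootMultiplicity x (hh Fq F3 M) + rootMultiplicity x (r0 Fq F3 M) = t + t := by
    rw [← hP12mult, ← hh_mul_r0 Fq F3 M hM,
      rootMultiplicity_mul (by rw [hh_mul_r0 Fq F3 M hM]; exact P12_ne_zero Fq F3 M hM)]
  have hr0mult : rootMultiplicity x (r0 Fq F3 M) = 0 := by omega
  have hr0 : (r0 Fq F3 M).eval x ≠ 0 := by
    intro h0
    have := (rootMultiplicity_pos (r0_ne_zero Fq F3 M hM)).mpr h0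
    omega
  refine ⟨hr0, ?_⟩
  rw [rz, eval_mul, fe_zero, hf, zero_mul]

lemma natDegree_Vx_le (hM : IsUnit M.det) :
    (Vx Fq F3 M).natDegree ≤ (r0 Fq F3 M).natDegree + 2 := by
  have := natDegree_mul_le (p := upoly F3 M 0) (q := r0 Fq F3 M)
  have h2 := upoly_natDegree F3 M 0
  rw [Vx]
  omega

lemma natDegree_Vy_le (hM : IsUnit M.det) :
    (Vy Fq F3 M).natDegree ≤ (r0 Fq F3 M).natDegree + 2 := by
  have := natDegree_mul_le (p := upoly F3 M 1) (q := r0 Fq F3 M)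
  have h2 := upoly_natDegree F3 M 1
  rw [Vy]
  omega

lemma Vx_coeff_top (hM : IsUnit M.det) :
    (Vx Fq F3 M).coeff ((r0 Fq F3 M).natDegree + 2) = M 0 2 * (r0 Fq F3 M).leadingCoeff := by
  rw [Vx, show (r0 Fq F3 M).natDegree + 2 = 2 + (r0 Fq F3 M).natDegree from by omega,
    coeff_mul_of_le (upoly_natDegree F3 M 0) (le_refl _)]
  rw [coeff_natDegree]
  congr 1
  have := upoly_coeff F3 M 0 2
  simpa using this

lemma Vy_coeff_top (hM : IsUnit M.det) :
    (Vy Fq F3 M).coeff ((r0 Fq F3 M).natDegree + 2) = M 1 2 * (r0 Fq F3 M).leadingCoeff := by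
  rw [Vy, show (r0 Fq F3 M).natDegree + 2 = 2 + (r0 Fq F3 M).natDegree from by omega,
    coeff_mul_of_le (upoly_natDegree F3 M 1) (le_refl _)]
  rw [coeff_natDegree]
  congr 1
  have := upoly_coeff F3 M 1 2
  simpa using this

lemma rz_coeff_top_eq (hM : IsUnit M.det) (hdf2 : (upoly F3 M 2).natDegree = 2) :
    (rz Fq F3 M).coeff ((r0 Fq F3 M).natDegree + 2) = M 2 2 * (r0 Fq F3 M).leadingCoeff := by
  have hdeg : (rz Fq F3 M).natDegree = (r0 Fq F3 M).natDegree + 2 := by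
    rw [natDegree_rz Fq F3 M hM, hdf2]; omega
  rw [← hdeg, coeff_natDegree, rz, leadingCoeff_mul]
  congr 1
  rw [fe_zero, leadingCoeff, hdf2]
  have := upoly_coeff F3 M 2 2
  simpa using this

lemma rz_coeff_top_zero (hM : IsUnit M.det) (hdf : (upoly F3 M 2).natDegree ≤ 1) :
    (rz Fq F3 M).coeff ((r0 Fq F3 M).natDegree + 2) = 0 := by
  apply coeff_eq_zero_of_natDegree_lt
  rw [natDegree_rz Fq F3 M hM]
  omega

end GeomEval

end BBAux
end BBAuxSection


lemma sum_smul_coeff {Fq F3 : Type*} [Field Fq] [Field F3] [Algebra Fq F3]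
    (p : Polynomial F3) {n : ℕ} (hp : p.natDegree < n) (θ : Fq) :
    ∑ i : Fin n, θ ^ (i : ℕ) • p.coeff i = p.eval (algebraMap Fq F3 θ) := by
  rw [Polynomial.eval_eq_sum_range' hp,
    Fin.sum_univ_eq_sum_range (fun i => θ ^ i • p.coeff i) n]
  refine Finset.sum_congr rfl fun i _ => ?_
  rw [Algebra.smul_def, map_pow, mul_comm]

lemma sum_mul_coeff {Fq : Type*} [Field Fq] (q : Polynomial Fq) {n : ℕ}
    (hq : q.natDegree < n) (θ : Fq) :
    ∑ i : Fin n, θ ^ (i : ℕ) * q.coeff i = q.eval θ := by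
  rw [Polynomial.eval_eq_sum_range' hq,
    Fin.sum_univ_eq_sum_range (fun i => θ ^ i * q.coeff i) n]
  refine Finset.sum_congr rfl fun i _ => ?_
  rw [mul_comm]

lemma pe_mk {K V : Type*} [DivisionRing K] [AddCommGroup V] [Module K V] {u : V}
    (hu : u ≠ 0) : pe (Projectivization.mk K u hu) u := by
  obtain ⟨a, ha⟩ := (Projectivization.mk_eq_mk_iff K _ _
    (Projectivization.rep_nonzero _) hu).mp (Projectivization.mk_rep (Projectivization.mk K u hu))
  refine ⟨(a : K), a.ne_zero, ?_⟩
  rw [← ha, Units.smul_def]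

end

set_option linter.unusedSectionVars false
set_option maxHeartbeats 1000000
noncomputable section
open scoped Classical
/-- Corollary 4.7: every `F_q`-conic of PG(2,q³) corresponds, in the
usual Bruck-Bose representation in PG(6,q), to a `k`-dim normal rational curve with
`k ∈ {2,3,4,6}`. -/
theorem fqConic_corresponds_nrc (Fq F3 F6 : Type) [Field Fq] [Field F3] [Field F6]
    [Fintype Fq] [Fintype F3] [Fintype F6]
    [Algebra Fq F3] [Algebra F3 F6] [Algebra Fq F6] [IsScalarTower Fq F3 F6]
    (h3 : Fintype.card F3 = Fintype.card Fq ^ 3)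
    (h6 : Fintype.card F6 = Fintype.card Fq ^ 6)
    (M : Matrix (Fin 3) (Fin 3) F3) (hM : IsUnit M.det) :
    ∃ k ∈ ({2, 3, 4, 6} : Set ℕ), ∃ N : Set (Pt6 Fq F3),
      IsNRC Fq F3 k N ∧ corrBB Fq F3 (conicOf Fq F3 M) N := by
  classical
  obtain ⟨rz0, hrz0⟩ := BBAux.exists_rz0 Fq F3 M h3 hM
  set m : ℕ := (BBAux.r0 Fq F3 M).natDegree with hmdef
  set k : ℕ := m + 2 with hkdef
  set v : Fin (k + 1) → V6 Fq F3 :=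
    fun i => (![(BBAux.Vx Fq F3 M).coeff i, (BBAux.Vy Fq F3 M).coeff i], rz0.coeff i) with hv
  have hdf : (BBAux.upoly F3 M 2).natDegree ≤ 2 := BBAux.upoly_natDegree F3 M 2
  have hsum := BBAux.hh_add_r0_deg Fq F3 M hM
  have hne1 := BBAux.dh_ne_one Fq F3 M h3 hM
  have hkmem : k ∈ ({2, 3, 4, 6} : Set ℕ) := by
    simp only [Set.mem_insert_iff, Set.mem_singleton_iff]
    omega
  -- degree bounds
  have hVxd : (BBAux.Vx Fq F3 M).natDegree < k + 1 := by
    have := BBAux.natDegree_Vx_le Fq F3 M hM; omega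
  have hVyd : (BBAux.Vy Fq F3 M).natDegree < k + 1 := by
    have := BBAux.natDegree_Vy_le Fq F3 M hM; omega
  have hrz0d : rz0.natDegree < k + 1 := by
    have h1 : rz0.natDegree = (BBAux.rz Fq F3 M).natDegree := by
      rw [← hrz0, Polynomial.natDegree_map]
    have h2 := BBAux.natDegree_rz Fq F3 M hM
    omega
  -- the evaluated curve vector
  have hSvec : ∀ θ : Fq, (∑ i : Fin (k + 1), θ ^ (i : ℕ) • v i) =
      ((![(BBAux.Vx Fq F3 M).eval (algebraMap Fq F3 θ),
          (BBAux.Vy Fq F3 M).eval (algebraMap Fq F3 θ)], rz0.eval θ) : V6 Fq F3) := by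
    intro θ
    have h1 : (∑ i : Fin (k + 1), θ ^ (i : ℕ) • v i).1 =
        ![(BBAux.Vx Fq F3 M).eval (algebraMap Fq F3 θ),
          (BBAux.Vy Fq F3 M).eval (algebraMap Fq F3 θ)] := by
      funext j
      rw [Prod.fst_sum, Finset.sum_apply]
      fin_cases j
      · simp only [hv, Prod.smul_fst, Pi.smul_apply, Matrix.cons_val_zero]
        exact sum_smul_coeff _ hVxd θ
      · simp only [hv, Prod.smul_fst, Pi.smul_apply, Matrix.cons_val_one, Matrix.head_cons]
        exact sum_smul_coeff _ hVyd θ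
    have h2 : (∑ i : Fin (k + 1), θ ^ (i : ℕ) • v i).2 = rz0.eval θ := by
      rw [Prod.snd_sum]
      simp only [hv, Prod.smul_snd, smul_eq_mul]
      exact sum_mul_coeff _ hrz0d θ
    exact Prod.ext h1 h2
  -- common auxiliary facts
  have hfixθ : ∀ θ : Fq, BBAux.frobQ Fq F3 (algebraMap Fq F3 θ) = algebraMap Fq F3 θ := by
    intro θ
    rw [BBAux.frobQ_apply, ← map_pow, FiniteField.pow_card]
  have hrzeval : ∀ θ : Fq, algebraMap Fq F3 (rz0.eval θ) =
      (BBAux.rz Fq F3 M).eval (algebraMap Fq F3 θ) := by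
    intro θ
    rw [← hrz0]
    exact (BBAux.eval_map_hom (algebraMap Fq F3) rz0 θ).symm
  have hrzcoeff : ∀ n : ℕ, algebraMap Fq F3 (rz0.coeff n) = (BBAux.rz Fq F3 M).coeff n := by
    intro n
    rw [← hrz0, Polynomial.coeff_map]
  have hmv : ∀ w : Fin 3 → F3, w ≠ 0 → M.mulVec w ≠ 0 := by
    intro w hw h0
    apply hw
    have h1 := congrArg (fun z => (M⁻¹).mulVec z) h0
    simpa [Matrix.mulVec_mulVec, Matrix.nonsing_inv_mul M hM] using h1
  have hwv : ∀ (θ : Fq) (j : Fin 3),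
      (M.mulVec fun i => algebraMap Fq F3 (![1, θ, θ ^ 2] i)) j =
        (BBAux.upoly F3 M j).eval (algebraMap Fq F3 θ) := by
    intro θ j
    simp [Matrix.mulVec, dotProduct, Fin.sum_univ_three, BBAux.upoly_eval, map_pow]
  have hm2v : ∀ j : Fin 3, (M.mulVec ![0, 0, 1]) j = M j 2 := by
    intro j
    simp [Matrix.mulVec, dotProduct, Fin.sum_univ_three]
  have hρ : (BBAux.r0 Fq F3 M).leadingCoeff ≠ 0 :=
    Polynomial.leadingCoeff_ne_zero.mpr (BBAux.r0_ne_zero Fq F3 M hM)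
  have hvlast : v (Fin.last k) =
      ((![M 0 2 * (BBAux.r0 Fq F3 M).leadingCoeff,
          M 1 2 * (BBAux.r0 Fq F3 M).leadingCoeff], rz0.coeff k) : V6 Fq F3) := by
    refine Prod.ext ?_ rfl
    show (![(BBAux.Vx Fq F3 M).coeff (Fin.last k), (BBAux.Vy Fq F3 M).coeff (Fin.last k)] :
      Fin 2 → F3) = _
    have hlv : ((Fin.last k : Fin (k + 1)) : ℕ) = m + 2 := Fin.val_last k
    funext i
    fin_cases i
    · show (BBAux.Vx Fq F3 M).coeff (Fin.last k) = _
      rw [hlv, BBAux.Vx_coeff_top Fq F3 M hM]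
      rfl
    · show (BBAux.Vy Fq F3 M).coeff (Fin.last k) = _
      rw [hlv, BBAux.Vy_coeff_top Fq F3 M hM]
      rfl
  -- the affine comparison lemma
  have haff : ∀ (θ : Fq) (x y : F3),
      (BBAux.upoly F3 M 0).eval (algebraMap Fq F3 θ) =
        (BBAux.upoly F3 M 2).eval (algebraMap Fq F3 θ) * x →
      (BBAux.upoly F3 M 1).eval (algebraMap Fq F3 θ) =
        (BBAux.upoly F3 M 2).eval (algebraMap Fq F3 θ) * y →
      (BBAux.upoly F3 M 2).eval (algebraMap Fq F3 θ) ≠ 0 →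
      ∃ d : Fq, d ≠ 0 ∧ (∑ i : Fin (k + 1), θ ^ (i : ℕ) • v i) =
        d • ((![x, y], (1 : Fq)) : V6 Fq F3) := by
    intro θ x y hxe hye hfne
    obtain ⟨hr0ne, hrzne⟩ := BBAux.eval_nonroot_facts Fq F3 M hM (hfixθ θ) hfne
    refine ⟨rz0.eval θ, ?_, ?_⟩
    · intro h0
      apply hrzne
      rw [← hrzeval θ, h0, map_zero]
    · rw [hSvec θ]
      have halg : algebraMap Fq F3 (rz0.eval θ) =
          (BBAux.upoly F3 M 2).eval (algebraMap Fq F3 θ) *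
            (BBAux.r0 Fq F3 M).eval (algebraMap Fq F3 θ) := by
        rw [hrzeval θ, BBAux.rz, Polynomial.eval_mul, BBAux.fe_zero]
      refine Prod.ext ?_ ?_
      · show (![(BBAux.Vx Fq F3 M).eval (algebraMap Fq F3 θ),
            (BBAux.Vy Fq F3 M).eval (algebraMap Fq F3 θ)] : Fin 2 → F3) =
          rz0.eval θ • ![x, y]
        funext i
        fin_cases i
        · show (BBAux.Vx Fq F3 M).eval (algebraMap Fq F3 θ) = rz0.eval θ • x
          rw [BBAux.Vx, Polynomial.eval_mul, hxe, Algebra.smul_def, halg]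
          ring
        · show (BBAux.Vy Fq F3 M).eval (algebraMap Fq F3 θ) = rz0.eval θ • y
          rw [BBAux.Vy, Polynomial.eval_mul, hye, Algebra.smul_def, halg]
          ring
      · show rz0.eval θ = rz0.eval θ * 1
        rw [mul_one]
  -- the last-point comparison lemma
  have hlastcmp : ∀ x y : F3, M 2 2 ≠ 0 → M 0 2 = M 2 2 * x → M 1 2 = M 2 2 * y →
      ∃ d : Fq, d ≠ 0 ∧ v (Fin.last k) = d • ((![x, y], (1 : Fq)) : V6 Fq F3) := by
    intro x y h22 hx2 hy2
    have hdf2 : (BBAux.upoly F3 M 2).natDegree = 2 := by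
      have hge : 2 ≤ (BBAux.upoly F3 M 2).natDegree := by
        apply Polynomial.le_natDegree_of_ne_zero
        have := BBAux.upoly_coeff F3 M 2 2
        rw [show ((2 : Fin 3) : ℕ) = 2 from rfl] at this
        rw [this]
        exact h22
      omega
    have halg : algebraMap Fq F3 (rz0.coeff k) =
        M 2 2 * (BBAux.r0 Fq F3 M).leadingCoeff := by
      rw [hrzcoeff k, hkdef, hmdef, BBAux.rz_coeff_top_eq Fq F3 M hM hdf2]
    refine ⟨rz0.coeff k, ?_, ?_⟩
    · intro h0
      rw [h0, map_zero] at halg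
      exact mul_ne_zero h22 hρ halg.symm
    · rw [hvlast]
      refine Prod.ext ?_ ?_
      · show (![M 0 2 * (BBAux.r0 Fq F3 M).leadingCoeff,
            M 1 2 * (BBAux.r0 Fq F3 M).leadingCoeff] : Fin 2 → F3) = rz0.coeff k • ![x, y]
        funext i
        fin_cases i
        · show M 0 2 * (BBAux.r0 Fq F3 M).leadingCoeff = rz0.coeff k • x
          rw [Algebra.smul_def, halg, hx2]
          ring
        · show M 1 2 * (BBAux.r0 Fq F3 M).leadingCoeff = rz0.coeff k • y
          rw [Algebra.smul_def, halg, hy2]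
          ring
      · show rz0.coeff k = rz0.coeff k * 1
        rw [mul_one]
  refine ⟨k, hkmem, nrcPts6 Fq F3 v, ⟨v, ?_, rfl⟩, ?_, ?_⟩
  · -- linear independence
    rw [Fintype.linearIndependent_iff]
    intro lam hzero
    apply BBAux.v_indep Fq F3 F6 M h3 h6 hM hrz0 (le_of_eq hkdef) lam
    · have h1 := congrArg (fun w : V6 Fq F3 => w.1 0) hzero
      simp only [Prod.fst_sum, Finset.sum_apply, hv, Prod.smul_fst, Pi.smul_apply,
        Matrix.cons_val_zero, Prod.fst_zero, Pi.zero_apply] at h1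
      rw [← h1]
      exact Finset.sum_congr rfl fun i _ => (Algebra.smul_def _ _).symm
    · have h1 := congrArg (fun w : V6 Fq F3 => w.1 1) hzero
      simp only [Prod.fst_sum, Finset.sum_apply, hv, Prod.smul_fst, Pi.smul_apply,
        Matrix.cons_val_one, Matrix.head_cons, Prod.fst_zero, Pi.zero_apply] at h1
      rw [← h1]
      exact Finset.sum_congr rfl fun i _ => (Algebra.smul_def _ _).symm
    · have h1 := congrArg (fun w : V6 Fq F3 => w.2) hzero
      simp only [Prod.snd_sum, hv, Prod.smul_snd, smul_eq_mul, Prod.snd_zero] at h1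
      exact h1
  · -- N ⊆ bbExact
    rintro Q hQ
    rcases hQ with ⟨θ, c, hc0, hrep⟩ | ⟨c, hc0, hrep⟩
    · -- a point with parameter θ
      set x3 := algebraMap Fq F3 θ with hx3
      set w : Fin 3 → F3 := M.mulVec fun i => algebraMap Fq F3 (![1, θ, θ ^ 2] i) with hwdef
      have hwj : ∀ j : Fin 3, w j = (BBAux.upoly F3 M j).eval x3 := hwv θ
      have hwne : w ≠ 0 := by
        apply hmv
        intro h0
        have := congrFun h0 0
        simp at this
      refine ⟨Projectivization.mk F3 w hwne, ⟨w, Or.inl ⟨θ, rfl⟩, pe_mk hwne⟩, ?_⟩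
      by_cases hf0 : (BBAux.upoly F3 M 2).eval x3 = 0
      · -- the conic point is at infinity: spread plane branch
        refine Or.inr ⟨w 0, w 1, ?_, ?_⟩
        · have hwform : w = ![w 0, w 1, 0] := by
            funext j
            fin_cases j
            · rfl
            · rfl
            · show w 2 = 0
              rw [hwj 2, hf0]
          exact hwform ▸ pe_mk hwne
        · -- Q in the spread plane
          obtain ⟨hr0ne, hrz0'⟩ := BBAux.eval_root_facts Fq F3 M hM (hfixθ θ) hf0
          have hz0 : rz0.eval θ = 0 := by
            have := hrzeval θ
            rw [hrz0'] at this
            exact (algebraMap Fq F3).injective (by rw [this, map_zero])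
          refine ⟨algebraMap Fq F3 c * (BBAux.r0 Fq F3 M).eval x3, ?_⟩
          rw [hrep, hSvec θ]
          refine Prod.ext ?_ ?_
          · show c • (![(BBAux.Vx Fq F3 M).eval x3, (BBAux.Vy Fq F3 M).eval x3] : Fin 2 → F3) = _
            funext i
            fin_cases i
            · show c • (BBAux.Vx Fq F3 M).eval x3 =
                algebraMap Fq F3 c * (BBAux.r0 Fq F3 M).eval x3 * w 0
              rw [Algebra.smul_def, BBAux.Vx, Polynomial.eval_mul, ← hwj 0]
              ring
            · show c • (BBAux.Vy Fq F3 M).eval x3 =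
                algebraMap Fq F3 c * (BBAux.r0 Fq F3 M).eval x3 * w 1
              rw [Algebra.smul_def, BBAux.Vy, Polynomial.eval_mul, ← hwj 1]
              ring
          · show c • rz0.eval θ = (0 : Fq)
            rw [hz0, smul_eq_mul, mul_zero]
      · -- affine branch
        have hsne : w 2 ≠ 0 := by rw [hwj 2]; exact hf0
        refine Or.inl ⟨w 0 * (w 2)⁻¹, w 1 * (w 2)⁻¹, ?_, ?_⟩
        · -- pe (mk w) ![x,y,1]
          have hwform : w = w 2 • ![w 0 * (w 2)⁻¹, w 1 * (w 2)⁻¹, 1] := by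
            funext j
            fin_cases j
            · show w 0 = w 2 • (w 0 * (w 2)⁻¹)
              rw [smul_eq_mul]
              field_simp
            · show w 1 = w 2 • (w 1 * (w 2)⁻¹)
              rw [smul_eq_mul]
              field_simp
            · show w 2 = w 2 • (1 : F3)
              rw [smul_eq_mul, mul_one]
          obtain ⟨cc, hcc0, hccrep⟩ := pe_mk (K := F3) hwne
          refine ⟨cc * w 2, mul_ne_zero hcc0 hsne, ?_⟩
          rw [← smul_smul, ← hwform]
          exact hccrep
        · -- pe Q (![x,y],1)
          obtain ⟨d, hd0, hdeq⟩ := haff θ (w 0 * (w 2)⁻¹) (w 1 * (w 2)⁻¹)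
            (by rw [← hwj 0, ← hwj 2]; field_simp)
            (by rw [← hwj 1, ← hwj 2]; field_simp)
            hf0
          exact ⟨c * d, mul_ne_zero hc0 hd0, by rw [hrep, hdeq, smul_smul]⟩
    · -- the point at the infinite parameter value
      set w : Fin 3 → F3 := M.mulVec ![0, 0, 1] with hwdef
      have hwj : ∀ j : Fin 3, w j = M j 2 := hm2v
      have hwne : w ≠ 0 := by
        apply hmv
        intro h0
        have := congrFun h0 2
        simp at this
      refine ⟨Projectivization.mk F3 w hwne, ⟨w, Or.inr rfl, pe_mk hwne⟩, ?_⟩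
      by_cases h22 : M 2 2 = 0
      · refine Or.inr ⟨M 0 2, M 1 2, ?_, ?_⟩
        · have hwform : w = ![M 0 2, M 1 2, 0] := by
            funext j
            fin_cases j
            · show w 0 = M 0 2
              rw [hwj 0]
            · show w 1 = M 1 2
              rw [hwj 1]
            · show w 2 = 0
              rw [hwj 2, h22]
          exact hwform ▸ pe_mk hwne
        · -- Q in the spread plane of (M 0 2 : M 1 2 : 0)
          have hdf1 : (BBAux.upoly F3 M 2).natDegree ≤ 1 := by
            rcases Nat.lt_or_ge (BBAux.upoly F3 M 2).natDegree 2 with h | h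
            · omega
            · exfalso
              have hdeq : (BBAux.upoly F3 M 2).natDegree = 2 := by omega
              have hlc : (BBAux.upoly F3 M 2).leadingCoeff ≠ 0 :=
                Polynomial.leadingCoeff_ne_zero.mpr (BBAux.upoly_ne_zero F3 M hM 2)
              apply hlc
              rw [Polynomial.leadingCoeff, hdeq]
              have := BBAux.upoly_coeff F3 M 2 2
              rw [show ((2 : Fin 3) : ℕ) = 2 from rfl] at this
              rw [this, h22]
          have hz0 : rz0.coeff k = 0 := by
            have h1 := hrzcoeff k
            rw [hkdef, hmdef, BBAux.rz_coeff_top_zero Fq F3 M hM hdf1] at h1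
            exact (algebraMap Fq F3).injective (by rw [h1, map_zero])
          refine ⟨algebraMap Fq F3 c * (BBAux.r0 Fq F3 M).leadingCoeff, ?_⟩
          rw [hrep, hvlast]
          refine Prod.ext ?_ ?_
          · show c • (![M 0 2 * (BBAux.r0 Fq F3 M).leadingCoeff,
                M 1 2 * (BBAux.r0 Fq F3 M).leadingCoeff] : Fin 2 → F3) = _
            funext i
            fin_cases i
            · show c • (M 0 2 * (BBAux.r0 Fq F3 M).leadingCoeff) =
                algebraMap Fq F3 c * (BBAux.r0 Fq F3 M).leadingCoeff * M 0 2
              rw [Algebra.smul_def]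
              ring
            · show c • (M 1 2 * (BBAux.r0 Fq F3 M).leadingCoeff) =
                algebraMap Fq F3 c * (BBAux.r0 Fq F3 M).leadingCoeff * M 1 2
              rw [Algebra.smul_def]
              ring
          · show c • rz0.coeff k = (0 : Fq)
            rw [hz0, smul_eq_mul, mul_zero]
      · -- affine last point
        refine Or.inl ⟨M 0 2 * (M 2 2)⁻¹, M 1 2 * (M 2 2)⁻¹, ?_, ?_⟩
        · have hwform : w = M 2 2 • ![M 0 2 * (M 2 2)⁻¹, M 1 2 * (M 2 2)⁻¹, 1] := by
            funext j
            fin_cases j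
            · show w 0 = M 2 2 • (M 0 2 * (M 2 2)⁻¹)
              rw [hwj 0, smul_eq_mul]
              field_simp
            · show w 1 = M 2 2 • (M 1 2 * (M 2 2)⁻¹)
              rw [hwj 1, smul_eq_mul]
              field_simp
            · show w 2 = M 2 2 • (1 : F3)
              rw [hwj 2, smul_eq_mul, mul_one]
          obtain ⟨cc, hcc0, hccrep⟩ := pe_mk (K := F3) hwne
          refine ⟨cc * M 2 2, mul_ne_zero hcc0 h22, ?_⟩
          rw [← smul_smul, ← hwform]
          exact hccrep
        · obtain ⟨d, hd0, hdeq⟩ := hlastcmp (M 0 2 * (M 2 2)⁻¹) (M 1 2 * (M 2 2)⁻¹) h22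
            (by field_simp) (by field_simp)
          exact ⟨c * d, mul_ne_zero hc0 hd0, by rw [hrep, hdeq, smul_smul]⟩
  · -- affine points of bbExact are in N
    rintro Q ⟨P, hPC, hbr⟩ hQinf
    rcases hbr with ⟨x, y, hPxy, hQxy⟩ | ⟨x, y, hPxy, hQsp⟩
    swap
    · exfalso
      apply hQinf
      obtain ⟨l, hl⟩ := hQsp
      show Q.rep.2 = 0
      rw [hl]
    obtain ⟨u, huC, hPu⟩ := hPC
    obtain ⟨c1, hc10, hrep1⟩ := hPxy
    obtain ⟨c2, hc20, hrep2⟩ := hPu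
    obtain ⟨c, hc0, hrepQ⟩ := hQxy
    have hueq : c2 • u = c1 • (![x, y, 1] : Fin 3 → F3) := by rw [← hrep1, ← hrep2]
    have hcomp : ∀ j : Fin 3, c2 * u j = c1 * (![x, y, 1] : Fin 3 → F3) j := by
      intro j
      have := congrFun hueq j
      simpa [smul_eq_mul] using this
    rcases huC with ⟨θ, hθ⟩ | hm2u
    · -- affine conic point with parameter θ
      set x3 := algebraMap Fq F3 θ with hx3
      have huj : ∀ j : Fin 3, u j = (BBAux.upoly F3 M j).eval x3 := by
        intro j
        rw [hθ]
        exact hwv θ j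
      have hu2 : c2 * (BBAux.upoly F3 M 2).eval x3 = c1 := by
        have h2 := hcomp 2
        rw [huj 2] at h2
        simpa using h2
      have hfne : (BBAux.upoly F3 M 2).eval x3 ≠ 0 := by
        intro h0
        rw [h0, mul_zero] at hu2
        exact hc10 hu2.symm
      have hx0 : (BBAux.upoly F3 M 0).eval x3 = (BBAux.upoly F3 M 2).eval x3 * x := by
        apply mul_left_cancel₀ hc20
        have h0 := hcomp 0
        rw [huj 0] at h0
        rw [h0]
        show c1 * x = _
        rw [← hu2]
        ring
      have hy0 : (BBAux.upoly F3 M 1).eval x3 = (BBAux.upoly F3 M 2).eval x3 * y := by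
        apply mul_left_cancel₀ hc20
        have h0 := hcomp 1
        rw [huj 1] at h0
        rw [h0]
        show c1 * y = _
        rw [← hu2]
        ring
      refine Or.inl ⟨θ, ?_⟩
      obtain ⟨d, hd0, hdeq⟩ := haff θ x y hx0 hy0 hfne
      refine ⟨c * d⁻¹, mul_ne_zero hc0 (inv_ne_zero hd0), ?_⟩
      rw [hrepQ, hdeq, smul_smul, mul_assoc, inv_mul_cancel₀ hd0, mul_one]
    · -- the conic point (M 0 2 : M 1 2 : M 2 2)
      have huj : ∀ j : Fin 3, u j = M j 2 := by
        intro j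
        rw [hm2u]
        exact hm2v j
      have hu2 : c2 * M 2 2 = c1 := by
        have h2 := hcomp 2
        rw [huj 2] at h2
        simpa using h2
      have h22 : M 2 2 ≠ 0 := by
        intro h0
        rw [h0, mul_zero] at hu2
        exact hc10 hu2.symm
      have hx0 : M 0 2 = M 2 2 * x := by
        apply mul_left_cancel₀ hc20
        have h0 := hcomp 0
        rw [huj 0] at h0
        rw [h0]
        show c1 * x = _
        rw [← hu2]
        ring
      have hy0 : M 1 2 = M 2 2 * y := by
        apply mul_left_cancel₀ hc20
        have h0 := hcomp 1
        rw [huj 1] at h0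
        rw [h0]
        show c1 * y = _
        rw [← hu2]
        ring
      refine Or.inr ?_
      obtain ⟨d, hd0, hdeq⟩ := hlastcmp x y h22 hx0 hy0
      refine ⟨c * d⁻¹, mul_ne_zero hc0 (inv_ne_zero hd0), ?_⟩
      rw [hrepQ, hdeq, smul_smul, mul_assoc, inv_mul_cancel₀ hd0, mul_one]
end
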